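/- Let G be a 2-connected signed graph with a 2-separation (G₁, G₂) where V(G₁) ∩ V(G₂) = {u, v}, and suppose eᵢ ∈ E(Gᵢ) for i = 1, 2. Let Gᵢ⁺ be Gᵢ with a positive edge fᵢ = uv added. Then e₁ and e₂ are tied in G if and only if eᵢ and fᵢ are tied in Gᵢ⁺ for both i = 1 and i = 2. -/

import Mathlib

/-- A finite loopless signed multigraph. -/
structure SGraph : Type 1 where
  V : Type
  E : Type
  [fintV : Fintype V]
  [decV : DecidableEq V]
  [fintE : Fintype E]
  [decE : DecidableEq E]
  ends : E → Sym2 V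
  loopless : ∀ e, ¬ (ends e).IsDiag
  sgn : E → ℤˣ

attribute [instance] SGraph.fintV SGraph.decV SGraph.fintE SGraph.decE

namespace SGraph

variable (G : SGraph)

/-- Degree of a vertex in an edge set. -/
noncomputable def deg (S : Set G.E) (v : G.V) : ℕ := {e ∈ S | v ∈ G.ends e}.ncard

/-- The sign of an edge set: the product of the signs of its edges. -/
noncomputable def signOf (S : Set G.E) : ℤˣ := ∏ᶠ e ∈ S, G.sgn e

/-- An edge set is connected: any two of its edges are linked by a chain of
edges of the set, consecutive ones sharing a vertex. -/
def conn (S : Set G.E) : Prop :=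
  ∀ e ∈ S, ∀ f ∈ S,
    Relation.ReflTransGen (fun a b => a ∈ S ∧ b ∈ S ∧ ∃ v, v ∈ G.ends a ∧ v ∈ G.ends b) e f

/-- An edge set is (the edge set of) a cycle: nonempty, every vertex has degree 0 or 2,
and it is connected. -/
def IsCycle (S : Set G.E) : Prop :=
  S.Nonempty ∧ (∀ v, G.deg S v = 0 ∨ G.deg S v = 2) ∧ G.conn S

/-- The vertices covered by an edge set. -/
def verts (S : Set G.E) : Set G.V := {v | ∃ e ∈ S, v ∈ G.ends e}

/-- Two edges are untied: there are cycles of both signs through both edges. -/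
def Untied (e₁ e₂ : G.E) : Prop :=
  (∃ C, G.IsCycle C ∧ e₁ ∈ C ∧ e₂ ∈ C ∧ G.signOf C = 1) ∧
  (∃ C, G.IsCycle C ∧ e₁ ∈ C ∧ e₂ ∈ C ∧ G.signOf C = -1)

/-- Two edges are tied: all cycles through both have the same sign. -/
def Tied (e₁ e₂ : G.E) : Prop :=
  ∀ C C', G.IsCycle C → G.IsCycle C' → e₁ ∈ C → e₂ ∈ C → e₁ ∈ C' → e₂ ∈ C' →
    G.signOf C = G.signOf C'

/-- A signed graph is balanced if every cycle is positive. -/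
def Balanced : Prop := ∀ C, G.IsCycle C → G.signOf C = 1

/-- Reachability between vertices avoiding a forbidden vertex set `S`. -/
def ReachOutside (S : Set G.V) : G.V → G.V → Prop :=
  Relation.ReflTransGen (fun a b => a ∉ S ∧ b ∉ S ∧ ∃ e, G.ends e = s(a, b))

/-- The graph minus the vertex set `S` is connected. -/
def ConnOutside (S : Set G.V) : Prop :=
  ∀ u v : G.V, u ∉ S → v ∉ S → G.ReachOutside S u v

/-- `k`-connectivity: more than `k` vertices, and removing fewer than `k` vertices
leaves a connected graph. -/
def KConnected (k : ℕ) : Prop :=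
  k + 1 ≤ Fintype.card G.V ∧ ∀ S : Set G.V, S.ncard < k → G.ConnOutside S

/-- `P` is the edge set of a path from `a` to `b` (possibly trivial when `a = b`). -/
def IsPath (P : Set G.E) (a b : G.V) : Prop :=
  (a = b ∧ P = ∅) ∨
  (a ≠ b ∧ P.Nonempty ∧ G.deg P a = 1 ∧ G.deg P b = 1 ∧
    (∀ v, v ≠ a → v ≠ b → G.deg P v = 0 ∨ G.deg P v = 2) ∧ G.conn P)

/-- The vertices of a path from `a` to `b`, including its ends. -/
def pverts (P : Set G.E) (a b : G.V) : Set G.V := G.verts P ∪ {a, b}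

/-- An edge set is an edge-cut `δ(X)`. -/
def EdgeCut (S : Set G.E) : Prop :=
  ∃ X : Set G.V, ∀ e, e ∈ S ↔ ∃ a b, G.ends e = s(a, b) ∧ a ∈ X ∧ b ∉ X

/-- A signed graph is simple if no two distinct edges are parallel. -/
def Simple : Prop := ∀ e f : G.E, G.ends e = G.ends f → e = f

end SGraph

namespace SGraph

/-- The signed graph obtained from the edges `E₁` of `G` by adding one extra edge
between `u` and `v` of sign `σ`. -/
def plus1 (G : SGraph) (E₁ : Finset G.E) {u v : G.V} (huv : u ≠ v) (σ : ℤˣ) : SGraph where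
  V := G.V
  E := {e : G.E // e ∈ E₁} ⊕ Unit
  ends := Sum.elim (fun e => G.ends e.1) (fun _ => s(u, v))
  loopless := by
    rintro (e | e)
    · exact G.loopless e.1
    · simpa [Sym2.mk_isDiag_iff] using huv
  sgn := Sum.elim (fun e => G.sgn e.1) (fun _ => σ)

/-- The signed graph obtained from the edges `E₁` of `G` by adding two extra parallel
edges between `u` and `v`, one positive and one negative. -/
def plus2 (G : SGraph) (E₁ : Finset G.E) {u v : G.V} (huv : u ≠ v) : SGraph where
  V := G.V
  E := {e : G.E // e ∈ E₁} ⊕ Bool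
  ends := Sum.elim (fun e => G.ends e.1) (fun _ => s(u, v))
  loopless := by
    rintro (e | e)
    · exact G.loopless e.1
    · simpa [Sym2.mk_isDiag_iff] using huv
  sgn := Sum.elim (fun e => G.sgn e.1) (fun b => if b then 1 else -1)

end SGraph

namespace SGraph

open Relation Set

variable {G : SGraph}

/-- The step relation on edges of an edge set. -/
def rel (G : SGraph) (S : Set G.E) : G.E → G.E → Prop :=
  fun a b => a ∈ S ∧ b ∈ S ∧ ∃ v, v ∈ G.ends a ∧ v ∈ G.ends b

lemma rel_symm (S : Set G.E) : Symmetric (G.rel S) := by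
  rintro a b ⟨ha, hb, w, hw1, hw2⟩; exact ⟨hb, ha, w, hw2, hw1⟩

lemma conn_def (S : Set G.E) :
    G.conn S ↔ ∀ e ∈ S, ∀ f ∈ S, Relation.ReflTransGen (G.rel S) e f := Iff.rfl

lemma ends_card (e : G.E) : ({w | w ∈ G.ends e} : Set G.V).ncard = 2 := by
  obtain ⟨⟨a, b⟩, hab⟩ := Quot.exists_rep (G.ends e)
  have hne : a ≠ b := by
    have := G.loopless e
    rw [← hab] at this
    simpa [Sym2.mk_isDiag_iff] using this
  have : {w | w ∈ G.ends e} = {a, b} := by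
    ext w
    simp only [Set.mem_setOf_eq, ← hab, Sym2.mem_iff, Set.mem_insert_iff, Set.mem_singleton_iff]
  rw [this, Set.ncard_pair hne]

lemma deg_insert (S : Set G.E) (e : G.E) (he : e ∉ S) (w : G.V) :
    G.deg (insert e S) w = G.deg S w + (if w ∈ G.ends e then 1 else 0) := by
  unfold deg
  by_cases hw : w ∈ G.ends e
  · rw [if_pos hw]
    have : {x ∈ insert e S | w ∈ G.ends x} = insert e {x ∈ S | w ∈ G.ends x} := by
      ext x; simp only [Set.mem_insert_iff, Set.mem_setOf_eq, Set.mem_sep_iff]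
      constructor
      · rintro ⟨(rfl | hx), hwx⟩
        · exact Or.inl rfl
        · exact Or.inr ⟨hx, hwx⟩
      · rintro (rfl | ⟨hx, hwx⟩)
        · exact ⟨Or.inl rfl, hw⟩
        · exact ⟨Or.inr hx, hwx⟩
    rw [this, Set.ncard_insert_of_notMem (fun hx => he hx.1) (Set.toFinite _)]
  · rw [if_neg hw]
    congr 1
    ext x; simp only [Set.mem_insert_iff, Set.mem_sep_iff]
    constructor
    · rintro ⟨(rfl | hx), hwx⟩
      · exact absurd hwx hw
      · exact ⟨hx, hwx⟩
    · rintro ⟨hx, hwx⟩; exact ⟨Or.inr hx, hwx⟩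

lemma even_sum_deg (S : Set G.E) : Even (∑ w, G.deg S w) := by
  classical
  refine Set.Finite.induction_on (motive := fun S _ => Even (∑ w, G.deg S w)) S
    (Set.toFinite S) ?_ ?_
  · simp [deg, Set.ncard_eq_zero]
  · intro e T he hT ih
    have : ∀ w, G.deg (insert e T) w = G.deg T w + (if w ∈ G.ends e then 1 else 0) :=
      fun w => G.deg_insert T e he w
    simp only [this, Finset.sum_add_distrib]
    refine ih.add ?_
    have h1 : ∑ w, (if w ∈ G.ends e then 1 else 0) =
        (Finset.univ.filter (fun w => w ∈ G.ends e)).card := by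
      rw [Finset.card_filter]
    rw [h1]
    have h2 : ((Finset.univ.filter (fun w => w ∈ G.ends e)) : Finset G.V).card
        = ({w | w ∈ G.ends e} : Set G.V).ncard := by
      rw [← Set.ncard_coe_finset]
      congr 1
      ext w; simp
    rw [h2, G.ends_card e]
    exact Even.add_self 1

lemma deg_union_disjoint {A B : Set G.E} (h : Disjoint A B) (w : G.V) :
    G.deg (A ∪ B) w = G.deg A w + G.deg B w := by
  unfold deg
  have : {e ∈ A ∪ B | w ∈ G.ends e} = {e ∈ A | w ∈ G.ends e} ∪ {e ∈ B | w ∈ G.ends e} := by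
    ext e
    constructor
    · rintro ⟨(h1 | h1), h2⟩
      · exact Or.inl ⟨h1, h2⟩
      · exact Or.inr ⟨h1, h2⟩
    · rintro (⟨h1, h2⟩ | ⟨h1, h2⟩)
      · exact ⟨Or.inl h1, h2⟩
      · exact ⟨Or.inr h1, h2⟩
  rw [this, Set.ncard_union_eq (h.mono (fun e he => he.1) (fun e he => he.1))
    (Set.toFinite _) (Set.toFinite _)]

lemma deg_mono {A B : Set G.E} (h : A ⊆ B) (w : G.V) : G.deg A w ≤ G.deg B w :=
  Set.ncard_le_ncard (fun e he => ⟨h he.1, he.2⟩) (Set.toFinite _)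

lemma deg_eq_zero_iff (S : Set G.E) (w : G.V) : G.deg S w = 0 ↔ w ∉ G.verts S := by
  unfold deg verts
  rw [Set.ncard_eq_zero (Set.toFinite _)]
  constructor
  · intro h hw
    obtain ⟨e, he, hwe⟩ := hw
    exact absurd (Set.eq_empty_iff_forall_notMem.mp h e ⟨he, hwe⟩) (fun h => h)
  · intro h
    ext e; simp only [Set.mem_sep_iff, Set.mem_empty_iff_false, iff_false]
    rintro ⟨he, hwe⟩
    exact h ⟨e, he, hwe⟩

lemma verts_mono {A B : Set G.E} (h : A ⊆ B) : G.verts A ⊆ G.verts B := by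
  rintro w ⟨e, he, hwe⟩; exact ⟨e, h he, hwe⟩

lemma mem_verts_of_edge {S : Set G.E} {e : G.E} {w : G.V} (he : e ∈ S) (hw : w ∈ G.ends e) :
    w ∈ G.verts S := ⟨e, he, hw⟩

lemma deg_one_unique {S : Set G.E} {w : G.V} (h : G.deg S w = 1) :
    ∃ g, (g ∈ S ∧ w ∈ G.ends g) ∧ ∀ g', g' ∈ S → w ∈ G.ends g' → g' = g := by
  obtain ⟨g, hg⟩ := Set.ncard_eq_one.mp h
  have hgm : g ∈ {e ∈ S | w ∈ G.ends e} := hg ▸ rfl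
  refine ⟨g, ⟨hgm.1, hgm.2⟩, fun g' h1 h2 => ?_⟩
  have : g' ∈ {e ∈ S | w ∈ G.ends e} := ⟨h1, h2⟩
  rw [hg] at this
  exact this

lemma even_pair {u v : G.V} (huv : u ≠ v) {f : G.V → ℕ} (hs : Even (∑ w, f w))
    (hrest : ∀ w, w ≠ u → w ≠ v → Even (f w)) : Even (f u + f v) := by
  classical
  have h1 : ∑ w, f w = f u + ∑ w ∈ Finset.univ.erase u, f w :=
    (Finset.add_sum_erase _ f (Finset.mem_univ u)).symm
  have h2 : ∑ w ∈ Finset.univ.erase u, f w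
      = f v + ∑ w ∈ (Finset.univ.erase u).erase v, f w :=
    (Finset.add_sum_erase _ f (Finset.mem_erase.mpr ⟨huv.symm, Finset.mem_univ v⟩)).symm
  have h3 : Even (∑ w ∈ (Finset.univ.erase u).erase v, f w) := by
    refine Finset.even_sum _ (fun w hw => ?_)
    rw [Finset.mem_erase, Finset.mem_erase] at hw
    exact hrest w hw.2.1 hw.1
  rw [h1, h2, ← add_assoc] at hs
  exact (Nat.even_add.mp hs).mpr h3

end SGraph

namespace SGraph

variable {G : SGraph}

lemma conn_aux {S : Set G.E} {u v : G.V} (huv : u ≠ v)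
    (hu : G.deg S u = 1) (hv : G.deg S v = 1)
    (hw : ∀ w, w ≠ u → w ≠ v → Even (G.deg S w))
    (hreach : ∀ a ∈ S, ∃ g, (g ∈ S ∧ (u ∈ G.ends g ∨ v ∈ G.ends g)) ∧
        Relation.ReflTransGen (G.rel S) a g) :
    G.conn S := by
  classical
  obtain ⟨eu, ⟨heuS, heu⟩, heuU⟩ := deg_one_unique hu
  have main : ∀ a ∈ S, Relation.ReflTransGen (G.rel S) a eu := by
    intro a ha
    set K : Set G.E := {g | g ∈ S ∧ Relation.ReflTransGen (G.rel S) a g} with hKdef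
    have hKsub : K ⊆ S := fun g hg => hg.1
    have hclosed : ∀ g ∈ K, ∀ h ∈ S, (∃ w, w ∈ G.ends g ∧ w ∈ G.ends h) → h ∈ K := by
      rintro g hg h hh ⟨w, hw1, hw2⟩
      exact ⟨hh, hg.2.trans (Relation.ReflTransGen.single ⟨hg.1, hh, w, hw1, hw2⟩)⟩
    have hdegK : ∀ w, w ∈ G.verts K → G.deg K w = G.deg S w := by
      intro w hwv
      unfold deg
      congr 1
      ext e
      refine ⟨fun he => ⟨hKsub he.1, he.2⟩, fun he => ?_⟩
      obtain ⟨k, hk, hwk⟩ := hwv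
      exact ⟨hclosed k hk e he.1 ⟨w, hwk, he.2⟩, he.2⟩
    have hKpar : (u ∈ G.verts K) ↔ (v ∈ G.verts K) := by
      have heven := even_sum_deg (G := G) K
      have hpair : Even (G.deg K u + G.deg K v) := by
        refine even_pair huv heven (fun w hwu hwv => ?_)
        by_cases hwK : w ∈ G.verts K
        · rw [hdegK w hwK]; exact hw w hwu hwv
        · rw [(deg_eq_zero_iff K w).mpr hwK]; exact Even.zero
      have hku : G.deg K u = (if u ∈ G.verts K then 1 else 0) := by
        split
        · rw [hdegK u ‹_›, hu]
        · exact (deg_eq_zero_iff K u).mpr ‹_›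
      have hkv : G.deg K v = (if v ∈ G.verts K then 1 else 0) := by
        split
        · rw [hdegK v ‹_›, hv]
        · exact (deg_eq_zero_iff K v).mpr ‹_›
      by_cases h1 : u ∈ G.verts K <;> by_cases h2 : v ∈ G.verts K
      · simp [h1, h2]
      · rw [hku, hkv, if_pos h1, if_neg h2] at hpair
        exact absurd hpair (by decide)
      · rw [hku, hkv, if_neg h1, if_pos h2] at hpair
        exact absurd hpair (by decide)
      · simp [h1, h2]
    obtain ⟨g, ⟨hgS, hgt⟩, hchain⟩ := hreach a ha
    have hgK : g ∈ K := ⟨hgS, hchain⟩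
    have huK : u ∈ G.verts K := by
      rcases hgt with h | h
      · exact ⟨g, hgK, h⟩
      · exact hKpar.mpr ⟨g, hgK, h⟩
    obtain ⟨k, hk, hwk⟩ := huK
    exact (hclosed k hk eu heuS ⟨u, hwk, heu⟩).2
  intro a ha b hb
  exact (main a ha).trans ((@Relation.ReflTransGen.symmetric _ _ ⟨fun _ _ h => (rel_symm S) h⟩).symm _ _ (main b hb))

/-- From a chain in `C`, extract an initial chain in `C₁` ending at a crossing edge. -/
lemma prefix_reach {C C₁ C₂ : Set G.E} (hun : C₁ ∪ C₂ = C)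
    {a c : G.E} (ha : a ∈ C₁) (hch : Relation.ReflTransGen (G.rel C) a c) :
    (c ∈ C₁ ∧ Relation.ReflTransGen (G.rel C₁) a c) ∨
    ∃ g g' w, g ∈ C₁ ∧ g' ∈ C₂ ∧ w ∈ G.ends g ∧ w ∈ G.ends g' ∧
      Relation.ReflTransGen (G.rel C₁) a g := by
  induction hch with
  | refl => exact Or.inl ⟨ha, Relation.ReflTransGen.refl⟩
  | tail _ hstep ih =>
    obtain ⟨hbC, hcC, w, hw1, hw2⟩ := hstep
    rw [← hun] at hcC
    rcases ih with ⟨hb1, hchain⟩ | hfound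
    · rcases hcC with hc1 | hc2
      · exact Or.inl ⟨hc1, hchain.trans
          (Relation.ReflTransGen.single ⟨hb1, hc1, w, hw1, hw2⟩)⟩
      · exact Or.inr ⟨_, _, w, hb1, hc2, hw1, hw2, hchain⟩
    · exact Or.inr hfound

lemma isPath_comm {P : Set G.E} {a b : G.V} (h : G.IsPath P a b) : G.IsPath P b a := by
  rcases h with ⟨h1, h2⟩ | ⟨h1, h2, h3, h4, h5, h6⟩
  · exact Or.inl ⟨h1.symm, h2⟩
  · exact Or.inr ⟨h1.symm, h2, h4, h3, fun w hw1 hw2 => h5 w hw2 hw1, h6⟩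

/-- Half of the split lemma. -/
lemma split_half {C C₁ C₂ : Set G.E} {u v : G.V} (huv : u ≠ v)
    (hC : G.IsCycle C) (hun : C₁ ∪ C₂ = C) (hdis : Disjoint C₁ C₂)
    (hverts : G.verts C₁ ∩ G.verts C₂ ⊆ {u, v})
    (h1 : C₁.Nonempty) (h2 : C₂.Nonempty) :
    G.IsPath C₁ u v := by
  obtain ⟨hCne, hCdeg, hCconn⟩ := hC
  obtain ⟨a, ha⟩ := h1
  obtain ⟨b, hb⟩ := h2
  have haC : a ∈ C := hun ▸ Or.inl ha
  have hbC : b ∈ C := hun ▸ Or.inr hb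
  have hdegsum : ∀ w, G.deg C₁ w + G.deg C₂ w = G.deg C w := by
    intro w; rw [← hun, deg_union_disjoint hdis]
  -- cross
  have hcross : ∃ w₀, w₀ ∈ ({u, v} : Set G.V) ∧ G.deg C₁ w₀ = 1 ∧ G.deg C₂ w₀ = 1 := by
    rcases prefix_reach hun ha (hCconn a haC b hbC) with ⟨hb1, _⟩ | ⟨g, g', w, hg, hg', hw1, hw2, _⟩
    · exact absurd hb1 (fun hb1 => (Set.disjoint_left.mp hdis hb1) hb)
    · have hwuv : w ∈ ({u, v} : Set G.V) := hverts ⟨⟨g, hg, hw1⟩, ⟨g', hg', hw2⟩⟩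
      have hd1 : 1 ≤ G.deg C₁ w := by
        rw [Nat.one_le_iff_ne_zero, Ne, deg_eq_zero_iff]
        simp only [not_not]
        exact ⟨g, hg, hw1⟩
      have hd2 : 1 ≤ G.deg C₂ w := by
        rw [Nat.one_le_iff_ne_zero, Ne, deg_eq_zero_iff]
        simp only [not_not]
        exact ⟨g', hg', hw2⟩
      have := hdegsum w
      rcases hCdeg w with h0 | h0 <;> rw [h0] at this
      · omega
      · exact ⟨w, hwuv, by omega, by omega⟩
  -- other degrees even / in {0,2}
  have hother : ∀ w, w ≠ u → w ≠ v → G.deg C₁ w = 0 ∨ G.deg C₁ w = G.deg C w := by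
    intro w hwu hwv
    by_cases hw1 : w ∈ G.verts C₁
    · by_cases hw2 : w ∈ G.verts C₂
      · exact absurd (hverts ⟨hw1, hw2⟩) (by simp [hwu, hwv])
      · right
        have := hdegsum w
        rw [(deg_eq_zero_iff C₂ w).mpr hw2] at this
        omega
    · exact Or.inl ((deg_eq_zero_iff C₁ w).mpr hw1)
  have hotherE : ∀ w, w ≠ u → w ≠ v → Even (G.deg C₁ w) := by
    intro w hwu hwv
    rcases hother w hwu hwv with h | h
    · rw [h]; exact Even.zero
    · rw [h]; rcases hCdeg w with h0 | h0 <;> rw [h0] <;> decide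
  have hother02 : ∀ w, w ≠ u → w ≠ v → G.deg C₁ w = 0 ∨ G.deg C₁ w = 2 := by
    intro w hwu hwv
    rcases hother w hwu hwv with h | h
    · exact Or.inl h
    · rw [h]; exact hCdeg w
  -- endpoint degrees
  have hdeg_uv : G.deg C₁ u = 1 ∧ G.deg C₁ v = 1 := by
    obtain ⟨w₀, hw₀, hd1, _⟩ := hcross
    have hpar : Even (G.deg C₁ u + G.deg C₁ v) :=
      even_pair huv (even_sum_deg C₁) hotherE
    have hle : ∀ w, G.deg C₁ w ≤ G.deg C w := fun w => by
      have := hdegsum w; omega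
    rcases hw₀ with rfl | rfl
    · have h2le : G.deg C₁ v ≤ 2 := le_trans (hle v) (by rcases hCdeg v with h|h <;> omega)
      have hnE : ¬ Even (G.deg C₁ v) := by
        intro he
        rw [Nat.even_add, hd1] at hpar
        exact (by decide : ¬ Even 1) (hpar.mpr he)
      have hv1 : G.deg C₁ v = 1 := by
        interval_cases h : G.deg C₁ v
        · exact absurd (by decide) hnE
        · rfl
        · exact absurd (by decide) hnE
      exact ⟨hd1, hv1⟩
    · have h2le : G.deg C₁ u ≤ 2 := le_trans (hle u) (by rcases hCdeg u with h|h <;> omega)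
      have hnE : ¬ Even (G.deg C₁ u) := by
        intro he
        rw [add_comm, Nat.even_add, hd1] at hpar
        exact (by decide : ¬ Even 1) (hpar.mpr he)
      have hu1 : G.deg C₁ u = 1 := by
        interval_cases h : G.deg C₁ u
        · exact absurd (by decide) hnE
        · rfl
        · exact absurd (by decide) hnE
      exact ⟨hu1, hd1⟩
  -- connectivity
  have hconn : G.conn C₁ := by
    refine conn_aux huv hdeg_uv.1 hdeg_uv.2 hotherE (fun c hc => ?_)
    have hcC : c ∈ C := hun ▸ Or.inl hc
    rcases prefix_reach hun hc (hCconn c hcC b hbC) with ⟨hb1, _⟩ | ⟨g, g', w, hg, hg', hw1, hw2, hchain⟩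
    · exact absurd hb1 (fun hb1 => (Set.disjoint_left.mp hdis hb1) hb)
    · have hwuv : w ∈ ({u, v} : Set G.V) := hverts ⟨⟨g, hg, hw1⟩, ⟨g', hg', hw2⟩⟩
      refine ⟨g, ⟨hg, ?_⟩, hchain⟩
      rcases hwuv with rfl | rfl
      · exact Or.inl hw1
      · exact Or.inr hw1
  exact Or.inr ⟨huv, ⟨a, ha⟩, hdeg_uv.1, hdeg_uv.2, hother02, hconn⟩

lemma split {C C₁ C₂ : Set G.E} {u v : G.V} (huv : u ≠ v)
    (hC : G.IsCycle C) (hun : C₁ ∪ C₂ = C) (hdis : Disjoint C₁ C₂)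
    (hverts : G.verts C₁ ∩ G.verts C₂ ⊆ {u, v})
    (h1 : C₁.Nonempty) (h2 : C₂.Nonempty) :
    G.IsPath C₁ u v ∧ G.IsPath C₂ u v :=
  ⟨split_half huv hC hun hdis hverts h1 h2,
   split_half huv hC (by rw [Set.union_comm]; exact hun) hdis.symm
     (by rw [Set.inter_comm]; exact hverts) h2 h1⟩

lemma signOf_union {A B : Set G.E} (h : Disjoint A B) :
    G.signOf (A ∪ B) = G.signOf A * G.signOf B :=
  finprod_mem_union h (Set.toFinite A) (Set.toFinite B)

lemma signOf_singleton {e : G.E} : G.signOf {e} = G.sgn e :=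
  finprod_mem_singleton

/-- Gluing two internally disjoint `u`–`v` paths gives a cycle. -/
lemma glue {P₁ P₂ : Set G.E} {u v : G.V} (huv : u ≠ v)
    (h₁ : G.IsPath P₁ u v) (h₂ : G.IsPath P₂ u v) (hdis : Disjoint P₁ P₂)
    (hverts : G.verts P₁ ∩ G.verts P₂ ⊆ {u, v}) :
    G.IsCycle (P₁ ∪ P₂) ∧ G.signOf (P₁ ∪ P₂) = G.signOf P₁ * G.signOf P₂ := by
  rcases h₁ with ⟨h, _⟩ | ⟨_, hne₁, hu₁, hv₁, hw₁, hc₁⟩; · exact absurd h huv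
  rcases h₂ with ⟨h, _⟩ | ⟨_, hne₂, hu₂, hv₂, hw₂, hc₂⟩; · exact absurd h huv
  refine ⟨⟨hne₁.mono Set.subset_union_left, ?_, ?_⟩, signOf_union hdis⟩
  · intro w
    rw [deg_union_disjoint hdis]
    by_cases hwu : w = u
    · subst hwu; rw [hu₁, hu₂]; right; rfl
    by_cases hwv : w = v
    · subst hwv; rw [hv₁, hv₂]; right; rfl
    have : w ∉ G.verts P₁ ∨ w ∉ G.verts P₂ := by
      by_contra hcon
      push_neg at hcon
      rcases hverts ⟨hcon.1, hcon.2⟩ with h | h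
      · exact hwu h
      · exact hwv h
    rcases this with h | h
    · rw [(deg_eq_zero_iff P₁ w).mpr h]
      simpa using hw₂ w hwu hwv
    · rw [(deg_eq_zero_iff P₂ w).mpr h]
      simpa using hw₁ w hwu hwv
  · -- connectivity
    obtain ⟨g₁, ⟨hg₁S, hg₁u⟩, _⟩ := deg_one_unique hu₁
    obtain ⟨g₂, ⟨hg₂S, hg₂u⟩, _⟩ := deg_one_unique hu₂
    have lift₁ : ∀ {x y}, Relation.ReflTransGen (G.rel P₁) x y →
        Relation.ReflTransGen (G.rel (P₁ ∪ P₂)) x y := fun h =>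
      Relation.ReflTransGen.mono
        (fun a b ⟨ha, hb, hw⟩ => ⟨Or.inl ha, Or.inl hb, hw⟩) _ _ h
    have lift₂ : ∀ {x y}, Relation.ReflTransGen (G.rel P₂) x y →
        Relation.ReflTransGen (G.rel (P₁ ∪ P₂)) x y := fun h =>
      Relation.ReflTransGen.mono
        (fun a b ⟨ha, hb, hw⟩ => ⟨Or.inr ha, Or.inr hb, hw⟩) _ _ h
    have hstep : Relation.ReflTransGen (G.rel (P₁ ∪ P₂)) g₁ g₂ :=
      Relation.ReflTransGen.single ⟨Or.inl hg₁S, Or.inr hg₂S, u, hg₁u, hg₂u⟩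
    have key : ∀ c ∈ P₁ ∪ P₂, Relation.ReflTransGen (G.rel (P₁ ∪ P₂)) c g₂ := by
      intro c hc
      rcases hc with hc | hc
      · exact (lift₁ (hc₁ c hc g₁ hg₁S)).trans hstep
      · exact lift₂ (hc₂ c hc g₂ hg₂S)
    intro e he f hf
    exact (key e he).trans
      ((@Relation.ReflTransGen.symmetric _ _ ⟨fun _ _ h => (rel_symm _) h⟩).symm _ _ (key f hf))

lemma isPath_single {f : G.E} {u v : G.V} (huv : u ≠ v) (h : G.ends f = s(u, v)) :
    G.IsPath {f} u v := by
  classical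
  have hdeg : ∀ w, G.deg {f} w = if w ∈ G.ends f then 1 else 0 := by
    intro w
    unfold deg
    by_cases hwf : w ∈ G.ends f
    · rw [if_pos hwf]
      have : {e ∈ ({f} : Set G.E) | w ∈ G.ends e} = {f} := by
        ext e
        simp only [Set.mem_singleton_iff, Set.mem_sep_iff]
        exact ⟨fun h => h.1, fun h => ⟨h, h ▸ hwf⟩⟩
      rw [this, Set.ncard_singleton]
    · rw [if_neg hwf]
      have : {e ∈ ({f} : Set G.E) | w ∈ G.ends e} = ∅ := by
        ext e
        simp only [Set.mem_singleton_iff, Set.mem_sep_iff, Set.mem_empty_iff_false, iff_false]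
        rintro ⟨he, hwe⟩
        rw [he] at hwe
        exact hwf hwe
      rw [this, Set.ncard_empty]
  refine Or.inr ⟨huv, ⟨f, rfl⟩, ?_, ?_, ?_, ?_⟩
  · rw [hdeg, if_pos (by rw [h]; exact Sym2.mem_mk_left u v)]
  · rw [hdeg, if_pos (by rw [h]; exact Sym2.mem_mk_right u v)]
  · intro w hwu hwv
    left
    rw [hdeg, if_neg]
    rw [h, Sym2.mem_iff]
    rintro (rfl | rfl)
    · exact hwu rfl
    · exact hwv rfl
  · intro e he f' hf'
    rw [Set.mem_singleton_iff] at he hf'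
    subst he; subst hf'
    exact Relation.ReflTransGen.refl

lemma verts_single {f : G.E} {u v : G.V} (h : G.ends f = s(u, v)) :
    G.verts {f} = {u, v} := by
  ext w
  simp only [verts, Set.mem_setOf_eq]
  constructor
  · rintro ⟨e, rfl, hw⟩
    rwa [h, Sym2.mem_iff] at hw
  · intro hw
    refine ⟨f, rfl, ?_⟩
    rw [h, Sym2.mem_iff]
    simpa using hw

end SGraph

namespace SGraph

variable {G : SGraph} {E₁ : Finset G.E} {u v : G.V} {huv : u ≠ v} {σ : ℤˣ}

/-- Embedding of an original edge into `plus1`. -/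
noncomputable def emb (G : SGraph) (E₁ : Finset G.E) {u v : G.V} (huv : u ≠ v) (σ : ℤˣ) (e : G.E) :
    (G.plus1 E₁ huv σ).E := by
  classical
  exact if h : e ∈ E₁ then Sum.inl ⟨e, h⟩ else Sum.inr ()

/-- Projection of an edge set of `plus1` back to `G`. -/
def proj (G : SGraph) (E₁ : Finset G.E) {u v : G.V} (huv : u ≠ v) (σ : ℤˣ)
    (D : Set (G.plus1 E₁ huv σ).E) : Set G.E :=
  {e | ∃ h : e ∈ E₁, Sum.inl ⟨e, h⟩ ∈ D}

lemma emb_eq {e : G.E} (h : e ∈ E₁) : G.emb E₁ huv σ e = Sum.inl ⟨e, h⟩ := by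
  unfold emb; exact dif_pos h

lemma ends_emb {e : G.E} (h : e ∈ E₁) :
    (G.plus1 E₁ huv σ).ends (G.emb E₁ huv σ e) = G.ends e := by
  rw [emb_eq h]; rfl

lemma sgn_emb {e : G.E} (h : e ∈ E₁) :
    (G.plus1 E₁ huv σ).sgn (G.emb E₁ huv σ e) = G.sgn e := by
  rw [emb_eq h]; rfl

lemma ends_inr : (G.plus1 E₁ huv σ).ends (Sum.inr ()) = s(u, v) := rfl

lemma sgn_inr : (G.plus1 E₁ huv σ).sgn (Sum.inr ()) = σ := rfl

lemma proj_sub (D : Set (G.plus1 E₁ huv σ).E) : G.proj E₁ huv σ D ⊆ ↑E₁ :=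
  fun _ he => he.1

lemma mem_proj {e : G.E} (h : e ∈ E₁) (D : Set (G.plus1 E₁ huv σ).E) :
    e ∈ G.proj E₁ huv σ D ↔ Sum.inl ⟨e, h⟩ ∈ D := by
  constructor
  · rintro ⟨h', hD⟩; exact hD
  · intro hD; exact ⟨h, hD⟩

lemma emb_image_proj {D : Set (G.plus1 E₁ huv σ).E} (hD : Sum.inr () ∉ D) :
    G.emb E₁ huv σ '' (G.proj E₁ huv σ D) = D := by
  ext x
  constructor
  · rintro ⟨e, ⟨he, hD'⟩, rfl⟩
    rw [emb_eq he]; exact hD'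
  · intro hx
    match x with
    | Sum.inl ⟨e, he⟩ => exact ⟨e, ⟨he, hx⟩, emb_eq he⟩
    | Sum.inr () => exact absurd hx hD

lemma emb_injOn : Set.InjOn (G.emb E₁ huv σ) ↑E₁ := by
  intro e he f hf hef
  rw [emb_eq he, emb_eq hf] at hef
  exact congrArg Subtype.val (Sum.inl.inj hef)

lemma proj_emb_image {P : Set G.E} (hP : P ⊆ ↑E₁) :
    G.proj E₁ huv σ (G.emb E₁ huv σ '' P) = P := by
  ext e
  constructor
  · rintro ⟨he, hmem⟩
    obtain ⟨f, hf, hfe⟩ := hmem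
    rw [emb_eq (hP hf)] at hfe
    have : f = e := congrArg Subtype.val (Sum.inl.inj hfe)
    rwa [← this]
  · intro he
    exact ⟨hP he, by rw [← emb_eq (huv := huv) (hP he)]; exact ⟨e, he, rfl⟩⟩

lemma inr_not_mem_emb_image {P : Set G.E} (hP : P ⊆ ↑E₁) :
    Sum.inr () ∉ G.emb E₁ huv σ '' P := by
  rintro ⟨e, he, hee⟩
  rw [emb_eq (hP he)] at hee
  cases hee

lemma deg_proj {D : Set (G.plus1 E₁ huv σ).E} (hD : Sum.inr () ∉ D) (w : G.V) :
    (G.plus1 E₁ huv σ).deg D w = G.deg (G.proj E₁ huv σ D) w := by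
  unfold deg
  have himg : {x ∈ D | w ∈ (G.plus1 E₁ huv σ).ends x} =
      G.emb E₁ huv σ '' {e ∈ G.proj E₁ huv σ D | w ∈ G.ends e} := by
    ext x
    constructor
    · intro ⟨hx, hw⟩
      match x with
      | Sum.inl ⟨e, he⟩ =>
        refine ⟨e, ⟨⟨he, hx⟩, ?_⟩, emb_eq he⟩
        rwa [show (G.plus1 E₁ huv σ).ends (Sum.inl ⟨e, he⟩) = G.ends e from rfl] at hw
      | Sum.inr () => exact absurd hx hD
    · rintro ⟨e, ⟨⟨he, hDe⟩, hw⟩, rfl⟩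
      refine ⟨by rw [emb_eq he]; exact hDe, ?_⟩
      rwa [ends_emb he]
  refine (congrArg Set.ncard himg).trans ?_
  rw [Set.ncard_image_of_injOn (emb_injOn.mono (fun e he => he.1.1))]

lemma signOf_proj {D : Set (G.plus1 E₁ huv σ).E} (hD : Sum.inr () ∉ D) :
    (G.plus1 E₁ huv σ).signOf D = G.signOf (G.proj E₁ huv σ D) := by
  unfold signOf
  have h1 : ∏ᶠ x ∈ D, (G.plus1 E₁ huv σ).sgn x
      = ∏ᶠ x ∈ (G.emb E₁ huv σ '' (G.proj E₁ huv σ D)), (G.plus1 E₁ huv σ).sgn x := by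
    rw [emb_image_proj hD]
  rw [h1, finprod_mem_image (emb_injOn.mono (proj_sub D))]
  exact finprod_mem_congr rfl (fun e he => sgn_emb he.1)

lemma conn_proj {D : Set (G.plus1 E₁ huv σ).E} (hD : Sum.inr () ∉ D) :
    (G.plus1 E₁ huv σ).conn D ↔ G.conn (G.proj E₁ huv σ D) := by
  constructor
  · intro hc e he f hf
    have key : ∀ x y, Relation.ReflTransGen ((G.plus1 E₁ huv σ).rel D) x y →
        ∀ (ex : G.E), ex ∈ G.proj E₁ huv σ D → x = G.emb E₁ huv σ ex →
        ∀ (fy : G.E), fy ∈ G.proj E₁ huv σ D → y = G.emb E₁ huv σ fy →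
        Relation.ReflTransGen (G.rel (G.proj E₁ huv σ D)) ex fy := by
      intro x y hxy
      induction hxy with
      | refl =>
        intro ex hex hx fy hfy hy
        have : ex = fy := emb_injOn (proj_sub D hex) (proj_sub D hfy) (hx ▸ hy)
        rw [this]
      | tail _ hstep ih =>
        rename_i b c _
        intro ex hex hx fy hfy hy
        obtain ⟨hbD, hcD, w, hw1, hw2⟩ := hstep
        match hb : b with
        | Sum.inr () => exact absurd (hb ▸ hbD) hD
        | Sum.inl ⟨eb, heb⟩ =>
          have hebp : eb ∈ G.proj E₁ huv σ D := ⟨heb, hbD⟩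
          have hchain := ih ex hex hx eb hebp (emb_eq heb).symm
          refine hchain.trans (Relation.ReflTransGen.single ⟨hebp, hfy, w, ?_, ?_⟩)
          · rwa [show (G.plus1 E₁ huv σ).ends (Sum.inl ⟨eb, heb⟩) = G.ends eb from rfl] at hw1
          · rw [hy, ends_emb (proj_sub D hfy)] at hw2; exact hw2
    exact key _ _ (hc _ ((mem_proj he.1 D).mp he) _ ((mem_proj hf.1 D).mp hf))
      e he (emb_eq he.1).symm f hf (emb_eq hf.1).symm
  · intro hc x hx y hy
    match x, y with
    | Sum.inr (), _ => exact absurd hx hD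
    | _, Sum.inr () => exact absurd hy hD
    | Sum.inl ⟨e, he⟩, Sum.inl ⟨f, hf⟩ =>
      have hchain := hc e ⟨he, hx⟩ f ⟨hf, hy⟩
      have hstep : ∀ a b, G.rel (G.proj E₁ huv σ D) a b →
          (G.plus1 E₁ huv σ).rel D (G.emb E₁ huv σ a) (G.emb E₁ huv σ b) := by
        rintro a b ⟨ha, hb, w, hw1, hw2⟩
        refine ⟨by rw [emb_eq ha.1]; exact ha.2, by rw [emb_eq hb.1]; exact hb.2, w, ?_, ?_⟩
        · rwa [ends_emb ha.1]
        · rwa [ends_emb hb.1]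
      have hlift : Relation.ReflTransGen ((G.plus1 E₁ huv σ).rel D) (G.emb E₁ huv σ e) (G.emb E₁ huv σ f) :=
        Relation.ReflTransGen.lift (r := G.rel (G.proj E₁ huv σ D))
        (G.emb E₁ huv σ) hstep _ _ hchain
      rwa [emb_eq he, emb_eq hf] at hlift

end SGraph

namespace MengerAux

open SimpleGraph

variable {V : Type} [DecidableEq V] {S : SimpleGraph V}

lemma first_split : ∀ {s t : V} (w : S.Walk s t) (A : Set V) [DecidablePred (· ∈ A)], t ∈ A →
    ∃ (z : V) (w₁ : S.Walk s z) (w₂ : S.Walk z t),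
      w = w₁.append w₂ ∧ z ∈ A ∧ ∀ c ∈ w₁.support, c ∈ A → c = z := by
  intro s t w
  induction w with
  | nil =>
    intro A _ ht
    exact ⟨_, Walk.nil, Walk.nil, rfl, ht, by simp⟩
  | @cons a b t hadj p ih =>
    intro A _ ht
    by_cases ha : a ∈ A
    · exact ⟨a, Walk.nil, Walk.cons hadj p, rfl, ha, by simp⟩
    · obtain ⟨z, w₁, w₂, heq, hz, hmin⟩ := ih A ht
      refine ⟨z, Walk.cons hadj w₁, w₂, by rw [Walk.cons_append, heq], hz, ?_⟩
      intro c hc hcA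
      rw [Walk.support_cons] at hc
      rcases List.mem_cons.mp hc with rfl | hc
      · exact absurd hcA ha
      · exact hmin c hc hcA

lemma end_not_mem_takeUntil {x y : V} {p : S.Walk x y} (hp : p.IsPath) {z : V}
    (hz : z ∈ p.support) (hzy : z ≠ y) : y ∉ (p.takeUntil z hz).support := by
  intro hy
  have hnd : p.support.Nodup := hp.support_nodup
  rw [← p.take_spec hz, Walk.support_append] at hnd
  have hyd : y ∈ (p.dropUntil z hz).support := Walk.end_mem_support _
  rcases (Walk.mem_support_iff _).mp hyd with h | h
  · exact hzy h.symm
  · exact (List.disjoint_of_nodup_append hnd) hy h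

/-- The avoiding-step relation in a simple graph. -/
def relA {V' : Type} (S : SimpleGraph V') (ξ : V') (c d : V') : Prop :=
  c ≠ ξ ∧ d ≠ ξ ∧ S.Adj c d

lemma relA_symm {V' : Type} (S : SimpleGraph V') (ξ : V') : Symmetric (relA S ξ) :=
  fun _ _ ⟨h1, h2, h3⟩ => ⟨h2, h1, h3.symm⟩

lemma walk_of_chain {x t : V} :
    ∀ {s : V}, Relation.ReflTransGen (relA S x) s t →
    s ≠ x → ∃ p : S.Walk s t, x ∉ p.support := by
  intro s hst
  induction hst using Relation.ReflTransGen.head_induction_on with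
  | refl =>
    intro ht
    exact ⟨Walk.nil, by simp [Ne.symm ht]⟩
  | head hstep _ ih =>
    intro _
    obtain ⟨hne1, hne2, hadj⟩ := hstep
    obtain ⟨p, hp⟩ := ih hne2
    refine ⟨Walk.cons hadj p, ?_⟩
    rw [Walk.support_cons]
    intro hmem
    rcases List.mem_cons.mp hmem with rfl | hmem
    · exact hne1 rfl
    · exact hp hmem

lemma concat_isPath {x y' y : V} {q : S.Walk x y'} (hq : q.IsPath) (hadj : S.Adj y' y)
    (hynq : y ∉ q.support) : (q.concat hadj).IsPath := by
  rw [Walk.isPath_def, Walk.support_concat]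
  refine List.Nodup.append hq.support_nodup (by simp) ?_
  intro c hc hc2
  rw [List.mem_singleton] at hc2
  subst hc2
  exact hynq hc

lemma case1 {x y y' : V} (hyx : y ≠ x) (hyy' : y ≠ y')
    {p q : S.Walk x y'} (hp : p.IsPath) (hq : q.IsPath)
    (hw : ∀ w, w ∈ p.support → w ∈ q.support → w = x ∨ w = y')
    (hadj : S.Adj y' y) (hyp : y ∈ p.support) :
    ∃ (P Q : S.Walk x y), P.IsPath ∧ Q.IsPath ∧
      ∀ w, w ∈ P.support → w ∈ Q.support → w = x ∨ w = y := by
  have hynq : y ∉ q.support := by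
    intro hyq
    rcases hw y hyp hyq with rfl | rfl
    · exact hyx rfl
    · exact hyy' rfl
  refine ⟨p.takeUntil y hyp, q.concat hadj, hp.takeUntil hyp, concat_isPath hq hadj hynq, ?_⟩
  intro w hwP hwQ
  rw [Walk.support_concat, List.mem_append, List.mem_singleton] at hwQ
  rcases hwQ with hwq | rfl
  · have hwp : w ∈ p.support := Walk.support_takeUntil_subset _ _ hwP
    rcases hw w hwp hwq with rfl | rfl
    · exact Or.inl rfl
    · exact absurd hwP (end_not_mem_takeUntil hp hyp hyy')
  · exact Or.inr rfl

lemma case2 {x y y' z : V} (hyy' : y ≠ y')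
    {p q : S.Walk x y'} (hp : p.IsPath) (hq : q.IsPath)
    (hw : ∀ w, w ∈ p.support → w ∈ q.support → w = x ∨ w = y')
    (hadj : S.Adj y' y) (hynq : y ∉ q.support)
    {rA : S.Walk z y} (hrA : rA.IsPath) (hy' : y' ∉ rA.support)
    (hzp : z ∈ p.support)
    (hmin : ∀ c ∈ rA.support, (c ∈ p.support ∨ c ∈ q.support) → c = z) :
    ∃ (P Q : S.Walk x y), P.IsPath ∧ Q.IsPath ∧
      ∀ w, w ∈ P.support → w ∈ Q.support → w = x ∨ w = y := by
  have hzy' : z ≠ y' := by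
    intro h
    exact hy' (h ▸ rA.start_mem_support)
  have hy'take : y' ∉ (p.takeUntil z hzp).support := end_not_mem_takeUntil hp hzp hzy'
  refine ⟨(p.takeUntil z hzp).append rA, q.concat hadj, ?_, concat_isPath hq hadj hynq, ?_⟩
  · rw [Walk.isPath_def, Walk.support_append]
    refine List.Nodup.append (hp.takeUntil hzp).support_nodup
      (hrA.support_nodup.tail) ?_
    intro c hc1 hc2
    have hcrA : c ∈ rA.support := List.mem_of_mem_tail hc2
    have hcp : c ∈ p.support := Walk.support_takeUntil_subset _ _ hc1
    have hcz : c = z := hmin c hcrA (Or.inl hcp)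
    subst hcz
    have hnd := hrA.support_nodup
    rw [rA.support_eq_cons] at hnd
    exact (List.nodup_cons.mp hnd).1 (by rw [rA.support_eq_cons] at hc2; simpa using hc2)
  · intro w hwP hwQ
    rw [Walk.support_concat, List.mem_append, List.mem_singleton] at hwQ
    rcases hwQ with hwq | rfl
    · rw [Walk.support_append, List.mem_append] at hwP
      rcases hwP with hwt | hwt
      · have hwp : w ∈ p.support := Walk.support_takeUntil_subset _ _ hwt
        rcases hw w hwp hwq with rfl | rfl
        · exact Or.inl rfl
        · exact absurd hwt hy'take
      · have hwrA : w ∈ rA.support := List.mem_of_mem_tail hwt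
        have hwz : w = z := hmin w hwrA (Or.inr hwq)
        subst hwz
        rcases hw w hzp hwq with rfl | rfl
        · exact Or.inl rfl
        · exact absurd (rA.start_mem_support) hy'
    · exact Or.inr rfl

lemma core {V : Type} [Fintype V] [DecidableEq V] (S : SimpleGraph V)
    (hcard : 3 ≤ Fintype.card V)
    (h : ∀ x w w' : V, w ≠ x → w' ≠ x → ∃ p : S.Walk w w', x ∉ p.support) :
    ∀ x y : V, x ≠ y → ∃ (p q : S.Walk x y), p.IsPath ∧ q.IsPath ∧
      ∀ w, w ∈ p.support → w ∈ q.support → w = x ∨ w = y := by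
  classical
  have hnonempty : Nonempty V := Fintype.card_pos_iff.mp (by omega)
  have hreach : ∀ w w' : V, S.Reachable w w' := by
    intro w w'
    obtain ⟨z, hz1, hz2⟩ : ∃ z : V, z ≠ w ∧ z ≠ w' := by
      by_contra hcon
      push_neg at hcon
      have hsub : (Finset.univ : Finset V) ⊆ {w, w'} := by
        intro z _
        rcases eq_or_ne z w with rfl | hne
        · exact Finset.mem_insert_self _ _
        · rw [hcon z hne]
          exact Finset.mem_insert_of_mem (Finset.mem_singleton_self _)
      have := Finset.card_le_card hsub
      have h2 := Finset.card_insert_le w ({w'} : Finset V)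
      simp only [Finset.card_univ, Finset.card_singleton] at this h2
      omega
    obtain ⟨p, _⟩ := h z w w' hz1.symm hz2.symm
    exact ⟨p⟩
  have hconn : S.Connected := ⟨hreach⟩
  have main : ∀ n : ℕ, ∀ x y : V, x ≠ y → S.dist x y = n →
      ∃ (p q : S.Walk x y), p.IsPath ∧ q.IsPath ∧
        ∀ w, w ∈ p.support → w ∈ q.support → w = x ∨ w = y := by
    intro n
    induction n using Nat.strong_induction_on with
    | _ n ih =>
      intro x y hxy hdist
      by_cases hadj : S.Adj x y
      · refine ⟨Walk.cons hadj Walk.nil, Walk.cons hadj Walk.nil, ?_, ?_, ?_⟩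
        · rw [Walk.isPath_def]; simp [hxy]
        · rw [Walk.isPath_def]; simp [hxy]
        · intro w hw _
          rw [Walk.support_cons, Walk.support_nil] at hw
          rcases List.mem_cons.mp hw with rfl | hw
          · exact Or.inl rfl
          · rw [List.mem_singleton] at hw
            exact Or.inr hw
      · -- dist ≥ 2
        have hd0 : S.dist x y ≠ 0 := fun h0 => hxy (hconn.dist_eq_zero_iff.mp h0)
        have hd1 : S.dist x y ≠ 1 := fun h1 => hadj (SimpleGraph.dist_eq_one_iff_adj.mp h1)
        have hd2 : 2 ≤ S.dist x y := by omega
        obtain ⟨ω, hω⟩ := hconn.exists_walk_length_eq_dist x y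
        obtain ⟨y', hadj', ω', hlen⟩ : ∃ (y' : V) (_ : S.Adj y' y) (ω' : S.Walk x y'),
            ω'.length + 1 = S.dist x y := by
          cases hrev : ω.reverse with
          | nil =>
            exfalso
            have : ω.reverse.length = 0 := by rw [hrev]; rfl
            rw [SimpleGraph.Walk.length_reverse, hω] at this
            omega
          | cons hadj'' ω'' =>
            rename_i c
            refine ⟨c, hadj''.symm, ω''.reverse, ?_⟩
            have : ω.reverse.length = ω''.length + 1 := by rw [hrev]; simp
            rw [SimpleGraph.Walk.length_reverse, hω] at this
            rw [SimpleGraph.Walk.length_reverse]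
            omega
        have hdy' : S.dist x y' = S.dist x y - 1 := by
          have hle : S.dist x y' ≤ S.dist x y - 1 := by
            have := SimpleGraph.dist_le ω'
            omega
          have hge : S.dist x y ≤ S.dist x y' + 1 := by
            have htri := hconn.dist_triangle (u := x) (v := y') (w := y)
            have : S.dist y' y ≤ 1 := by
              have := SimpleGraph.dist_le hadj'.toWalk
              simpa using this
            omega
          omega
        have hxy' : x ≠ y' := by
          intro hh
          rw [← hh] at hdy'
          rw [hconn.dist_eq_zero_iff.mpr rfl] at hdy'
          omega
        obtain ⟨p, q, hp, hq, hw⟩ := ih (n - 1) (by omega) x y' hxy' (by omega)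
        have hyy' : y ≠ y' := hadj'.ne.symm
        obtain ⟨r₀, hr₀⟩ := h y' x y hxy' hyy'
        have hrpath : r₀.bypass.IsPath := SimpleGraph.Walk.bypass_isPath r₀
        have hrny' : y' ∉ r₀.bypass.support :=
          fun hh => hr₀ (SimpleGraph.Walk.support_bypass_subset _ hh)
        by_cases hyp : y ∈ p.support
        · exact case1 hxy.symm hyy' hp hq hw hadj' hyp
        by_cases hyq : y ∈ q.support
        · obtain ⟨P, Q, h1', h2', h3'⟩ :=
            case1 hxy.symm hyy' hq hp (fun w hw1 hw2 => hw w hw2 hw1) hadj' hyq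
          exact ⟨P, Q, h1', h2', fun w a b => (h3' w a b)⟩
        -- case 2
        have hxA : x ∈ {c | c ∈ p.support ∨ c ∈ q.support} := Or.inl p.start_mem_support
        obtain ⟨z, w₁, w₂, heq, hz, hmin⟩ :=
          first_split r₀.bypass.reverse {c | c ∈ p.support ∨ c ∈ q.support} hxA
        have hw₁path : w₁.IsPath := by
          have happ : (w₁.append w₂).IsPath := by rw [← heq]; exact hrpath.reverse
          exact SimpleGraph.Walk.IsPath.of_append_left happ
        have hrA : w₁.reverse.IsPath := hw₁path.reverse
        have hsub : ∀ c, c ∈ w₁.support → c ∈ r₀.bypass.support := by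
          intro c hc
          have hmem : c ∈ (w₁.append w₂).support := by
            rw [SimpleGraph.Walk.support_append]
            exact List.mem_append_left _ hc
          rw [← heq, SimpleGraph.Walk.support_reverse] at hmem
          exact List.mem_reverse.mp hmem
        have hy'w₁ : y' ∉ w₁.reverse.support := by
          rw [SimpleGraph.Walk.support_reverse, List.mem_reverse]
          intro hh
          exact hrny' (hsub _ hh)
        have hminA : ∀ c ∈ w₁.reverse.support, (c ∈ p.support ∨ c ∈ q.support) → c = z := by
          intro c hc hcA
          rw [SimpleGraph.Walk.support_reverse, List.mem_reverse] at hc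
          exact hmin c hc hcA
        rcases hz with hzp | hzq
        · exact case2 hyy' hp hq hw hadj' hyq hrA hy'w₁ hzp hminA
        · exact case2 hyy' hq hp (fun w h1' h2' => hw w h2' h1') hadj' hyp hrA hy'w₁ hzq
            (fun c hc hcA => hminA c hc hcA.symm)
  intro x y hxy
  exact main (S.dist x y) x y hxy rfl

end MengerAux


namespace MengerAux

open SimpleGraph

variable {V : Type} [DecidableEq V] {S : SimpleGraph V}

lemma count_edges : ∀ {x y : V} (p : S.Walk x y), p.IsPath → x ≠ y → ∀ c : V,
    (p.edges.filter (fun z => c ∈ z)).length =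
      if c ∈ p.support then (if c = x ∨ c = y then 1 else 2) else 0 := by
  intro x y p
  induction p with
  | nil => intro _ hxy _; exact absurd rfl hxy
  | @cons a b t hadj p ih =>
    intro hp hxy c
    have hp' : p.IsPath := hp.of_cons
    have hanp : a ∉ p.support := ((Walk.cons_isPath_iff hadj p).mp hp).2
    have hab : a ≠ b := hadj.ne
    rw [Walk.edges_cons, List.filter_cons]
    by_cases hcab : c ∈ s(a, b)
    · rw [if_pos (by simpa using hcab)]
      rw [List.length_cons]
      rcases Sym2.mem_iff.mp hcab with rfl | rfl
      · -- c = a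
        have h0 : p.edges.filter (fun z => decide (c ∈ z)) = [] := by
          rw [List.filter_eq_nil_iff]
          intro z hz hcz
          rw [decide_eq_true_eq] at hcz
          obtain ⟨d, rfl⟩ := Sym2.mem_iff_exists.mp hcz
          exact hanp (p.fst_mem_support_of_mem_edges hz)
        rw [h0]
        rw [if_pos (Walk.start_mem_support _), if_pos (Or.inl rfl)]
        rfl
      · -- c = b
        have hcs : c ∈ (Walk.cons hadj p).support := by
          rw [Walk.support_cons]
          exact List.mem_cons_of_mem _ p.start_mem_support
        rw [if_pos hcs]
        by_cases hbt : c = t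
        · -- b = t : p is a path from b to b, so nil
          have hnil : p.Nil := by
            have : p.IsPath := hp'
            subst hbt
            rw [Walk.isPath_iff_eq_nil] at this
            subst this
            exact Walk.Nil.nil
          have h0 : p.edges = [] := by
            cases p with
            | nil => rfl
            | cons h q => exact absurd hnil Walk.not_nil_cons
          rw [h0]
          simp only [List.filter_nil, List.length_nil]
          rw [if_pos (Or.inr hbt)]
        · have hca : c ≠ a := hab.symm
          rw [if_neg (by rintro (rfl | rfl); exact hca rfl; exact hbt rfl)]
          rw [ih hp' hbt c, if_pos p.start_mem_support, if_pos (Or.inl rfl)]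
    · rw [if_neg (by simpa using hcab)]
      have hca : c ≠ a := fun h => hcab (h ▸ Sym2.mem_mk_left a b)
      have hcb : c ≠ b := fun h => hcab (h ▸ Sym2.mem_mk_right a b)
      by_cases hbt : b = t
      · subst hbt
        have hnil : p = Walk.nil := (Walk.isPath_iff_eq_nil).mp hp'
        subst hnil
        simp only [Walk.edges_nil, List.filter_nil, List.length_nil]
        rw [if_neg]
        intro hcs
        rw [Walk.support_cons, Walk.support_nil] at hcs
        rcases List.mem_cons.mp hcs with rfl | hcs
        · exact hca rfl
        · rw [List.mem_singleton] at hcs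
          exact hcb hcs
      · rw [ih hp' hbt c]
        have hsup : c ∈ (Walk.cons hadj p).support ↔ c ∈ p.support := by
          rw [Walk.support_cons]
          constructor
          · intro h
            rcases List.mem_cons.mp h with rfl | h
            · exact absurd rfl hca
            · exact h
          · exact List.mem_cons_of_mem _
        by_cases hcp : c ∈ p.support
        · rw [if_pos hcp, if_pos (hsup.mpr hcp)]
          have h1 : (c = b ∨ c = t) ↔ (c = a ∨ c = t) := by
            constructor
            · rintro (rfl | rfl)
              · exact absurd rfl hcb
              · exact Or.inr rfl
            · rintro (rfl | rfl)
              · exact absurd rfl hca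
              · exact Or.inr rfl
          rw [if_congr h1 rfl rfl]
        · rw [if_neg hcp, if_neg (fun h => hcp (hsup.mp h))]

lemma mem_support_of_mem_edge {x y c : V} (p : S.Walk x y) {z : Sym2 V}
    (hz : z ∈ p.edges) (hc : c ∈ z) : c ∈ p.support := by
  obtain ⟨d, rfl⟩ := Sym2.mem_iff_exists.mp hc
  exact p.fst_mem_support_of_mem_edges hz

end MengerAux

namespace SGraph

open SimpleGraph

variable {G : SGraph}

lemma chain_to_head {V' : Type} {S : SimpleGraph V'} (val : V' → G.V)
    (rep : Sym2 V' → G.E) (Q : Set G.E) :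
    ∀ {s c t : V'} (h : S.Adj s c) (o : S.Walk c t),
      (∀ z ∈ (Walk.cons h o).edges, rep z ∈ Q ∧ G.ends (rep z) = Sym2.map val z) →
      ∀ z ∈ (Walk.cons h o).edges, Relation.ReflTransGen (G.rel Q) (rep z) (rep s(s, c)) := by
  intro s c t h o
  induction o generalizing s with
  | nil =>
    intro _ z hz
    rw [Walk.edges_cons, Walk.edges_nil, List.mem_singleton] at hz
    rw [hz]
  | @cons c d t' h' o' ih =>
    intro hQ z hz
    have hQ' : ∀ z ∈ (Walk.cons h' o').edges, rep z ∈ Q ∧ G.ends (rep z) = Sym2.map val z :=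
      fun z hz => hQ z (by rw [Walk.edges_cons]; exact List.mem_cons_of_mem _ hz)
    rw [Walk.edges_cons, List.mem_cons] at hz
    rcases hz with rfl | hz
    · exact Relation.ReflTransGen.refl
    · have hch := ih h' hQ' z hz
      refine hch.trans (Relation.ReflTransGen.single ?_)
      have hm1 : s(c, d) ∈ (Walk.cons h' o').edges := by
        rw [Walk.edges_cons]; exact List.mem_cons_self
      have hm2 : s(s, c) ∈ (Walk.cons h (Walk.cons h' o')).edges := by
        rw [Walk.edges_cons]; exact List.mem_cons_self
      refine ⟨(hQ' _ hm1).1, (hQ _ hm2).1, val c, ?_, ?_⟩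
      · rw [(hQ' _ hm1).2, Sym2.map_pair_eq]
        exact Sym2.mem_mk_left _ _
      · rw [(hQ _ hm2).2, Sym2.map_pair_eq]
        exact Sym2.mem_mk_right _ _

lemma conn_from_walk {V' : Type} {S : SimpleGraph V'} (val : V' → G.V)
    (rep : Sym2 V' → G.E) {s t : V'} (o : S.Walk s t)
    (hends : ∀ z ∈ o.edges, G.ends (rep z) = Sym2.map val z) :
    G.conn {e | ∃ z ∈ o.edges, rep z = e} := by
  cases o with
  | nil =>
    intro e he
    obtain ⟨z, hz, _⟩ := he
    rw [Walk.edges_nil] at hz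
    exact absurd hz (List.not_mem_nil)
  | @cons s c t h o' =>
    intro e he f hf
    obtain ⟨z, hz, rfl⟩ := he
    obtain ⟨z', hz', rfl⟩ := hf
    have hQ : ∀ z ∈ (Walk.cons h o').edges,
        rep z ∈ {e | ∃ z ∈ (Walk.cons h o').edges, rep z = e} ∧
        G.ends (rep z) = Sym2.map val z :=
      fun z hz => ⟨⟨z, hz, rfl⟩, hends z hz⟩
    exact (chain_to_head val rep _ h o' hQ z hz).trans
      ((@Relation.ReflTransGen.symmetric _ _ ⟨fun _ _ h => (rel_symm _) h⟩).symm _ _ (chain_to_head val rep _ h o' hQ z' hz'))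

/-- The auxiliary simple graph: vertices of `E₂` plus a subdivision vertex `m = inr false`
on the edge `e₂ = ab` and an apex `m' = inr true` joined to `u` and `v`. -/
def mg (G : SGraph) (E₂ : Finset G.E) (u v a b : G.V) :
    SimpleGraph ({w : G.V // w ∈ G.verts (↑E₂ : Set G.E)} ⊕ Bool) where
  Adj x y :=
    match x, y with
    | Sum.inl x, Sum.inl y => x ≠ y ∧ ∃ e ∈ E₂, G.ends e = s(x.1, y.1)
    | Sum.inl x, Sum.inr false => x.1 = a ∨ x.1 = b
    | Sum.inr false, Sum.inl x => x.1 = a ∨ x.1 = b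
    | Sum.inl x, Sum.inr true => x.1 = u ∨ x.1 = v
    | Sum.inr true, Sum.inl x => x.1 = u ∨ x.1 = v
    | _, _ => False
  symm := by
    refine ⟨?_⟩
    rintro (x | (_|_)) (y | (_|_)) h <;> try exact h
    · obtain ⟨e, he, hee⟩ := h.2
      exact ⟨Ne.symm h.1, e, he, by rw [hee, Sym2.eq_swap]⟩
  loopless := by
    refine ⟨?_⟩
    rintro (x | (_|_)) h
    · exact h.1 rfl
    · exact h
    · exact h

end SGraph

namespace SGraph

open SimpleGraph

/-- The vertex set of `E₂`, as a type. -/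
abbrev Wt (G : SGraph) (E₂ : Finset G.E) : Type := {w : G.V // w ∈ G.verts (↑E₂ : Set G.E)}

variable {G : SGraph} {E₁ E₂ : Finset G.E} {u v a b : G.V}

open MengerAux

lemma mg_adj_edge {c d : G.Wt E₂} {e : G.E} (he : e ∈ E₂) (hee : G.ends e = s(c.1, d.1)) :
    (G.mg E₂ u v a b).Adj (Sum.inl c) (Sum.inl d) := by
  refine ⟨?_, e, he, hee⟩
  rintro rfl
  exact G.loopless e (by rw [hee]; exact Sym2.mk_isDiag_iff.mpr rfl)

/-- Chains within `E₂` avoiding a vertex `x` lift to chains in `mg` avoiding `ξ`. -/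
lemma lift2 (ξ : G.Wt E₂ ⊕ Bool) (x t : G.V)
    (hξ : ∀ c : G.Wt E₂, c.1 ≠ x → Sum.inl c ≠ ξ)
    (ht : t ∈ G.verts (↑E₂ : Set G.E)) :
    ∀ {z : G.V},
      Relation.ReflTransGen (fun c d => c ≠ x ∧ d ≠ x ∧ ∃ e ∈ E₂, G.ends e = s(c, d)) z t →
      ∀ hz : z ∈ G.verts (↑E₂ : Set G.E),
      Relation.ReflTransGen (relA (G.mg E₂ u v a b) ξ) (Sum.inl ⟨z, hz⟩) (Sum.inl ⟨t, ht⟩) := by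
  intro z hch
  induction hch using Relation.ReflTransGen.head_induction_on with
  | refl => intro _; exact Relation.ReflTransGen.refl
  | head hstep _ ih =>
    intro hz
    obtain ⟨hzx, hz₁x, e, he2, hee⟩ := hstep
    rename_i z₀ z₁ _
    have hz₁ : z₁ ∈ G.verts (↑E₂ : Set G.E) := ⟨e, he2, by rw [hee]; exact Sym2.mem_mk_right _ _⟩
    refine Relation.ReflTransGen.head ⟨hξ _ hzx, hξ _ hz₁x, mg_adj_edge he2 hee⟩ (ih hz₁)

/-- A vertex of `E₂` different from `x ∈ {u,v}` reaches the other one of `u,v`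
within `E₂` avoiding `x`, thanks to the separation. -/
lemma reachE2 (hcover : E₁ ∪ E₂ = Finset.univ) {x t : G.V}
    (hsep2 : G.verts ↑E₁ ∩ G.verts ↑E₂ ⊆ {x, t}) :
    ∀ {z : G.V}, G.ReachOutside {x} z t → z ∈ G.verts (↑E₂ : Set G.E) →
      Relation.ReflTransGen (fun c d => c ≠ x ∧ d ≠ x ∧ ∃ e ∈ E₂, G.ends e = s(c, d)) z t := by
  intro z hch
  induction hch using Relation.ReflTransGen.head_induction_on with
  | refl => intro _; exact Relation.ReflTransGen.refl
  | head hstep _ ih =>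
    intro hz
    obtain ⟨hzx, hz₁x, e, hee⟩ := hstep
    rename_i z₀ z₁ _
    simp only [Set.mem_singleton_iff] at hzx hz₁x
    rcases Finset.mem_union.mp (by rw [hcover]; exact Finset.mem_univ e) with he1 | he2
    · have hz1 : z₀ ∈ G.verts (↑E₁ : Set G.E) := ⟨e, he1, by rw [hee]; exact Sym2.mem_mk_left _ _⟩
      rcases hsep2 ⟨hz1, hz⟩ with h | h
      · exact absurd h hzx
      · rw [h]
    · have hz₁ : z₁ ∈ G.verts (↑E₂ : Set G.E) := ⟨e, he2, by rw [hee]; exact Sym2.mem_mk_right _ _⟩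
      exact Relation.ReflTransGen.head ⟨hzx, hz₁x, e, he2, hee⟩ (ih hz₁)

/-- Rerouting walks of `G` avoiding `x ∉ {u,v}` into the graph `mg`, using the apex `m'`
in place of the other side of the separation. -/
lemma reach_plus (hcover : E₁ ∪ E₂ = Finset.univ)
    {x : G.V} (hsep2 : G.verts ↑E₁ ∩ G.verts ↑E₂ ⊆ {u, v})
    (hxu : x ≠ u) (hxv : x ≠ v)
    (hu2 : u ∈ G.verts (↑E₂ : Set G.E)) (hv2 : v ∈ G.verts (↑E₂ : Set G.E))
    (ξ : G.Wt E₂ ⊕ Bool) (hξm' : Sum.inr true ≠ ξ)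
    (hξ : ∀ c : G.Wt E₂, c.1 ≠ x → Sum.inl c ≠ ξ)
    {z' : G.V} (hz' : z' ∈ G.verts (↑E₂ : Set G.E)) (hz'x : z' ≠ x) :
    ∀ {z : G.V}, G.ReachOutside {x} z z' →
      (∀ hz : z ∈ G.verts (↑E₂ : Set G.E),
        Relation.ReflTransGen (relA (G.mg E₂ u v a b) ξ) (Sum.inl ⟨z, hz⟩) (Sum.inl ⟨z', hz'⟩)) ∧
      (z ∈ G.verts (↑E₁ : Set G.E) →
        Relation.ReflTransGen (relA (G.mg E₂ u v a b) ξ) (Sum.inl ⟨u, hu2⟩) (Sum.inl ⟨z', hz'⟩)) := by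
  have hop1 : ∀ (c d : G.Wt E₂), (c.1 = u ∨ c.1 = v) → (d.1 = u ∨ d.1 = v) →
      Relation.ReflTransGen (relA (G.mg E₂ u v a b) ξ) (Sum.inl c) (Sum.inl d) := by
    intro c d hc hd
    have hcx : c.1 ≠ x := by rcases hc with h | h <;> rw [h] <;> [exact hxu.symm; exact hxv.symm]
    have hdx : d.1 ≠ x := by rcases hd with h | h <;> rw [h] <;> [exact hxu.symm; exact hxv.symm]
    by_cases hcd : c = d
    · rw [hcd]
    · exact Relation.ReflTransGen.head (b := Sum.inr true) ⟨hξ c hcx, hξm', hc⟩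
        (Relation.ReflTransGen.single ⟨hξm', hξ d hdx, hd⟩)
  intro z hch
  induction hch using Relation.ReflTransGen.head_induction_on with
  | refl =>
    constructor
    · intro hz; exact Relation.ReflTransGen.refl
    · intro hz1
      exact hop1 ⟨u, hu2⟩ ⟨z', hz'⟩ (Or.inl rfl) (by simpa using hsep2 ⟨hz1, hz'⟩)
  | head hstep _ ih =>
    rename_i z₀ z₁ _
    obtain ⟨hzx, hz₁x, e, hee⟩ := hstep
    simp only [Set.mem_singleton_iff] at hzx hz₁x
    rcases Finset.mem_union.mp (by rw [hcover]; exact Finset.mem_univ e) with he1 | he2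
    · have hzV1 : z₀ ∈ G.verts (↑E₁ : Set G.E) := ⟨e, he1, by rw [hee]; exact Sym2.mem_mk_left _ _⟩
      have hz₁V1 : z₁ ∈ G.verts (↑E₁ : Set G.E) := ⟨e, he1, by rw [hee]; exact Sym2.mem_mk_right _ _⟩
      refine ⟨?_, fun _ => ih.2 hz₁V1⟩
      intro hz
      have hzuv : z₀ ∈ ({u, v} : Set G.V) := hsep2 ⟨hzV1, hz⟩
      exact (hop1 ⟨z₀, hz⟩ ⟨u, hu2⟩ (by simpa using hzuv) (Or.inl rfl)).trans (ih.2 hz₁V1)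
    · have hzV2 : z₀ ∈ G.verts (↑E₂ : Set G.E) := ⟨e, he2, by rw [hee]; exact Sym2.mem_mk_left _ _⟩
      have hz₁V2 : z₁ ∈ G.verts (↑E₂ : Set G.E) := ⟨e, he2, by rw [hee]; exact Sym2.mem_mk_right _ _⟩
      have hstep' : relA (G.mg E₂ u v a b) ξ (Sum.inl ⟨z₀, hzV2⟩) (Sum.inl ⟨z₁, hz₁V2⟩) :=
        ⟨hξ _ hzx, hξ _ hz₁x, mg_adj_edge he2 hee⟩
      constructor
      · intro hz
        exact Relation.ReflTransGen.head hstep' (ih.1 hz₁V2)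
      · intro hzV1
        have hzuv : z₀ ∈ ({u, v} : Set G.V) := hsep2 ⟨hzV1, hzV2⟩
        exact (hop1 ⟨u, hu2⟩ ⟨z₀, hzV2⟩ (Or.inl rfl) (by simpa using hzuv)).trans
          (Relation.ReflTransGen.head hstep' (ih.1 hz₁V2))

end SGraph

namespace SGraph

open SimpleGraph MengerAux

variable {G : SGraph}

lemma mg_conn (G : SGraph) (h2 : G.KConnected 2) (E₁ E₂ : Finset G.E)
    (hcover : E₁ ∪ E₂ = Finset.univ)
    (u v a b : G.V) (huv : u ≠ v) (hane : a ≠ b)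
    (hsep2 : G.verts ↑E₁ ∩ G.verts ↑E₂ ⊆ {u, v})
    (hu2 : u ∈ G.verts (↑E₂ : Set G.E)) (hv2 : v ∈ G.verts (↑E₂ : Set G.E))
    (ha2 : a ∈ G.verts (↑E₂ : Set G.E)) (hb2 : b ∈ G.verts (↑E₂ : Set G.E))
    (ξ c d : G.Wt E₂ ⊕ Bool) (hc : c ≠ ξ) (hd : d ≠ ξ) :
    ∃ p : (G.mg E₂ u v a b).Walk c d, ξ ∉ p.support := by
  classical
  have hreach : ∀ (x z t : G.V), z ≠ x → t ≠ x → G.ReachOutside {x} z t := by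
    intro x z t hz ht
    refine h2.2 {x} (by rw [Set.ncard_singleton]; omega) z t (by simpa) (by simpa)
  have hRuv : ∀ (z : G.V), z ∈ G.verts (↑E₂ : Set G.E) → z ≠ u →
      Relation.ReflTransGen (fun c d => c ≠ u ∧ d ≠ u ∧ ∃ e ∈ E₂, G.ends e = s(c, d)) z v :=
    fun z hz hzu => reachE2 hcover hsep2 (hreach u z v hzu huv.symm) hz
  have hRvu : ∀ (z : G.V), z ∈ G.verts (↑E₂ : Set G.E) → z ≠ v →
      Relation.ReflTransGen (fun c d => c ≠ v ∧ d ≠ v ∧ ∃ e ∈ E₂, G.ends e = s(c, d)) z u :=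
    fun z hz hzv => reachE2 hcover (by rw [Set.pair_comm]; exact hsep2)
      (hreach v z u hzv huv) hz
  have toVne : ∀ (ξ' : G.Wt E₂ ⊕ Bool), (∀ c' : G.Wt E₂, c'.1 ≠ u → Sum.inl c' ≠ ξ') →
      ∀ (c' : G.Wt E₂), c'.1 ≠ u →
      Relation.ReflTransGen (relA (G.mg E₂ u v a b) ξ') (Sum.inl c') (Sum.inl ⟨v, hv2⟩) := by
    intro ξ' hξ' c' hcu
    exact lift2 (u := u) (v := v) (a := a) (b := b) ξ' u v hξ' hv2 (hRuv c'.1 c'.2 hcu) c'.2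
  have toUne : ∀ (ξ' : G.Wt E₂ ⊕ Bool), (∀ c' : G.Wt E₂, c'.1 ≠ v → Sum.inl c' ≠ ξ') →
      ∀ (c' : G.Wt E₂), c'.1 ≠ v →
      Relation.ReflTransGen (relA (G.mg E₂ u v a b) ξ') (Sum.inl c') (Sum.inl ⟨u, hu2⟩) := by
    intro ξ' hξ' c' hcv
    exact lift2 (u := u) (v := v) (a := a) (b := b) ξ' v u hξ' hu2 (hRvu c'.1 c'.2 hcv) c'.2
  have toV : ∀ (ξ' : G.Wt E₂ ⊕ Bool), (∀ c' : G.Wt E₂, Sum.inl c' ≠ ξ') →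
      ∀ (c' : G.Wt E₂),
      Relation.ReflTransGen (relA (G.mg E₂ u v a b) ξ') (Sum.inl c') (Sum.inl ⟨v, hv2⟩) := by
    intro ξ' hξinl c'
    by_cases hcu : c'.1 = u
    · obtain ⟨e₀, he₀, hue⟩ := hu2
      obtain ⟨n, hn⟩ := Sym2.mem_iff_exists.mp hue
      have hnu : n ≠ u := by
        rintro rfl
        exact G.loopless e₀ (by rw [hn]; exact Sym2.mk_isDiag_iff.mpr rfl)
      have hn2 : n ∈ G.verts (↑E₂ : Set G.E) :=
        ⟨e₀, he₀, by rw [hn]; exact Sym2.mem_mk_right _ _⟩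
      have hstep : relA (G.mg E₂ u v a b) ξ' (Sum.inl c') (Sum.inl ⟨n, hn2⟩) :=
        ⟨hξinl _, hξinl _, mg_adj_edge he₀ (by rw [hcu]; exact hn)⟩
      exact Relation.ReflTransGen.head hstep (toVne ξ' (fun c'' _ => hξinl c'') ⟨n, hn2⟩ hnu)
    · exact toVne ξ' (fun c'' _ => hξinl c'') c' hcu
  have hpick : ∀ (t₀ : G.V), ∃ c₀ : G.Wt E₂, (c₀.1 = a ∨ c₀.1 = b) ∧ c₀.1 ≠ t₀ := by
    intro t₀
    by_cases hat : a = t₀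
    · exact ⟨⟨b, hb2⟩, Or.inr rfl, by rw [← hat]; exact hane.symm⟩
    · exact ⟨⟨a, ha2⟩, Or.inl rfl, hat⟩
  have hcommon : ∀ ξ' : G.Wt E₂ ⊕ Bool, ∃ τ : G.Wt E₂ ⊕ Bool,
      ∀ c', c' ≠ ξ' → Relation.ReflTransGen (relA (G.mg E₂ u v a b) ξ') c' τ := by
    intro ξ'
    match ξ' with
    | Sum.inr false =>
      refine ⟨Sum.inl ⟨v, hv2⟩, ?_⟩
      intro c' hc'
      match c' with
      | Sum.inl zz => exact toV _ (fun _ => by simp) zz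
      | Sum.inr true =>
        exact Relation.ReflTransGen.single ⟨by simp, by simp, Or.inr rfl⟩
      | Sum.inr false => exact absurd rfl hc'
    | Sum.inr true =>
      refine ⟨Sum.inl ⟨v, hv2⟩, ?_⟩
      intro c' hc'
      match c' with
      | Sum.inl zz => exact toV _ (fun _ => by simp) zz
      | Sum.inr false =>
        exact Relation.ReflTransGen.head (b := Sum.inl ⟨a, ha2⟩)
          ⟨by simp, by simp, Or.inl rfl⟩ (toV _ (fun _ => by simp) ⟨a, ha2⟩)
      | Sum.inr true => exact absurd rfl hc'
    | Sum.inl ww =>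
      by_cases hwu : ww.1 = u
      · refine ⟨Sum.inl ⟨v, hv2⟩, ?_⟩
        have hξ' : ∀ c'' : G.Wt E₂, c''.1 ≠ u → (Sum.inl c'' : G.Wt E₂ ⊕ Bool) ≠ Sum.inl ww := by
          intro c'' h hh
          exact h (by rw [Sum.inl.inj hh, hwu])
        intro c' hc'
        match c' with
        | Sum.inl zz =>
          have hzu : zz.1 ≠ u := by
            intro h
            exact hc' (congrArg Sum.inl (Subtype.ext (h.trans hwu.symm)))
          exact toVne _ hξ' zz hzu
        | Sum.inr false =>
          obtain ⟨c₀, hc₀, hc₀u⟩ := hpick u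
          exact Relation.ReflTransGen.head (b := Sum.inl c₀)
            ⟨by simp, hξ' c₀ hc₀u, hc₀⟩ (toVne _ hξ' c₀ hc₀u)
        | Sum.inr true =>
          exact Relation.ReflTransGen.single
            ⟨by simp, hξ' ⟨v, hv2⟩ huv.symm, Or.inr rfl⟩
      · by_cases hwv : ww.1 = v
        · refine ⟨Sum.inl ⟨u, hu2⟩, ?_⟩
          have hξ' : ∀ c'' : G.Wt E₂, c''.1 ≠ v → (Sum.inl c'' : G.Wt E₂ ⊕ Bool) ≠ Sum.inl ww := by
            intro c'' h hh
            exact h (by rw [Sum.inl.inj hh, hwv])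
          intro c' hc'
          match c' with
          | Sum.inl zz =>
            have hzv : zz.1 ≠ v := by
              intro h
              exact hc' (congrArg Sum.inl (Subtype.ext (h.trans hwv.symm)))
            exact toUne _ hξ' zz hzv
          | Sum.inr false =>
            obtain ⟨c₀, hc₀, hc₀v⟩ := hpick v
            exact Relation.ReflTransGen.head (b := Sum.inl c₀)
              ⟨by simp, hξ' c₀ hc₀v, hc₀⟩ (toUne _ hξ' c₀ hc₀v)
          | Sum.inr true =>
            exact Relation.ReflTransGen.single
              ⟨by simp, hξ' ⟨u, hu2⟩ huv, Or.inl rfl⟩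
        · -- interior vertex
          refine ⟨Sum.inl ⟨u, hu2⟩, ?_⟩
          have hξm' : (Sum.inr true : G.Wt E₂ ⊕ Bool) ≠ Sum.inl ww := by simp
          have hξ' : ∀ c'' : G.Wt E₂, c''.1 ≠ ww.1 → (Sum.inl c'' : G.Wt E₂ ⊕ Bool) ≠ Sum.inl ww := by
            intro c'' h hh
            exact h (by rw [Sum.inl.inj hh])
          have hxu : ww.1 ≠ u := hwu
          have hxv : ww.1 ≠ v := hwv
          have hinl : ∀ (zz : G.Wt E₂), zz.1 ≠ ww.1 →
              Relation.ReflTransGen (relA (G.mg E₂ u v a b) (Sum.inl ww))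
                (Sum.inl zz) (Sum.inl ⟨u, hu2⟩) := by
            intro zz hzw
            have hrp := (reach_plus (a := a) (b := b) hcover hsep2 hxu hxv hu2 hv2
              (Sum.inl ww) hξm' hξ' hu2 (fun h => hxu h.symm)
              (hreach ww.1 zz.1 u hzw (fun h => hxu h.symm))).1
            exact hrp zz.2
          intro c' hc'
          match c' with
          | Sum.inl zz =>
            have hzw : zz.1 ≠ ww.1 := by
              intro h
              exact hc' (congrArg Sum.inl (Subtype.ext h))
            exact hinl zz hzw
          | Sum.inr false =>
            obtain ⟨c₀, hc₀, hc₀w⟩ := hpick ww.1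
            exact Relation.ReflTransGen.head (b := Sum.inl c₀)
              ⟨by simp, hξ' c₀ hc₀w, hc₀⟩ (hinl c₀ hc₀w)
          | Sum.inr true =>
            exact Relation.ReflTransGen.single
              ⟨by simp, hξ' ⟨u, hu2⟩ (fun h => hxu h.symm), Or.inl rfl⟩
  obtain ⟨τ, hτ⟩ := hcommon ξ
  exact MengerAux.walk_of_chain
    ((hτ c hc).trans ((@Relation.ReflTransGen.symmetric _ _ ⟨fun _ _ h => (relA_symm _ _) h⟩).symm _ _ (hτ d hd))) hc

end SGraph

namespace SGraph

open SimpleGraph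

/-- Decomposing a path of `mg` from `m` to `m'`. -/
lemma mg_decomp {G : SGraph} {E₂ : Finset G.E} {u v a b : G.V}
    (p : (G.mg E₂ u v a b).Walk (Sum.inr false) (Sum.inr true)) (hp : p.IsPath) :
    ∃ (x₁ y₁ : G.Wt E₂) (mid : (G.mg E₂ u v a b).Walk (Sum.inl y₁) (Sum.inl x₁)),
      (x₁.1 = a ∨ x₁.1 = b) ∧ (y₁.1 = u ∨ y₁.1 = v) ∧ mid.IsPath ∧
      (∀ c ∈ mid.support, c ∈ p.support) ∧
      Sum.inr false ∉ mid.support ∧ Sum.inr true ∉ mid.support := by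
  cases p with
  | cons h₁ p₁ =>
    rename_i c₁
    match c₁, h₁, p₁ with
    | Sum.inr false, h₁, _ => exact h₁.elim
    | Sum.inr true, h₁, _ => exact h₁.elim
    | Sum.inl x₁, h₁, p₁ =>
      have hp₁ : p₁.IsPath := hp.of_cons
      have hm₁ : Sum.inr false ∉ p₁.support := ((Walk.cons_isPath_iff _ _).mp hp).2
      cases hrev : p₁.reverse with
      | cons h₂ p₂ =>
        rename_i d₁
        match d₁, h₂, p₂ with
        | Sum.inr false, h₂, _ => exact h₂.elim
        | Sum.inr true, h₂, _ => exact h₂.elim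
        | Sum.inl y₁, h₂, p₂ =>
          have hy₁ : y₁.1 = u ∨ y₁.1 = v := h₂
          have hp₁r : p₁.reverse.IsPath := hp₁.reverse
          rw [hrev] at hp₁r
          have hmid : p₂.IsPath := hp₁r.of_cons
          have hm'₂ : Sum.inr true ∉ p₂.support := ((Walk.cons_isPath_iff _ _).mp hp₁r).2
          have hsub : ∀ c ∈ p₂.support, c ∈ p₁.support := by
            intro c hcm
            have hmem : c ∈ p₁.reverse.support := by
              rw [hrev, Walk.support_cons]
              exact List.mem_cons_of_mem _ hcm
            rwa [Walk.support_reverse, List.mem_reverse] at hmem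
          refine ⟨x₁, y₁, p₂, h₁, hy₁, hmid, ?_, ?_, hm'₂⟩
          · intro c hcm
            rw [Walk.support_cons]
            exact List.mem_cons_of_mem _ (hsub c hcm)
          · intro hcm
            exact hm₁ (hsub _ hcm)

/-- Existence of a `u`–`v` path within `E₂` through `e₂` (uses 2-connectivity). -/
lemma exists_path (G : SGraph) (h2 : G.KConnected 2) (E₁ E₂ : Finset G.E)
    (hdisj : Disjoint E₁ E₂) (hcover : E₁ ∪ E₂ = Finset.univ)
    (u v : G.V) (huv : u ≠ v)
    (hsep : G.verts ↑E₁ ∩ G.verts ↑E₂ = {u, v})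
    (e₂ : G.E) (he₂ : e₂ ∈ E₂) :
    ∃ Q : Set G.E, Q ⊆ ↑E₂ ∧ G.IsPath Q u v ∧ e₂ ∈ Q := by
  classical
  have hsep2 : G.verts ↑E₁ ∩ G.verts ↑E₂ ⊆ {u, v} := hsep.le
  have hsub12 : ({u, v} : Set G.V) ⊆ G.verts (↑E₂ : Set G.E) := by
    rw [← hsep]; exact Set.inter_subset_right
  have hu2 : u ∈ G.verts (↑E₂ : Set G.E) := hsub12 (Set.mem_insert _ _)
  have hv2 : v ∈ G.verts (↑E₂ : Set G.E) := hsub12 (Set.mem_insert_of_mem _ rfl)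
  obtain ⟨⟨a, b⟩, hab0⟩ := Quot.exists_rep (G.ends e₂)
  have hab : G.ends e₂ = s(a, b) := hab0.symm
  have hane : a ≠ b := by
    intro h
    exact G.loopless e₂ (by rw [hab, h]; exact Sym2.mk_isDiag_iff.mpr rfl)
  have ha2 : a ∈ G.verts (↑E₂ : Set G.E) := ⟨e₂, he₂, by rw [hab]; exact Sym2.mem_mk_left _ _⟩
  have hb2 : b ∈ G.verts (↑E₂ : Set G.E) := ⟨e₂, he₂, by rw [hab]; exact Sym2.mem_mk_right _ _⟩
  haveI : Fintype (G.Wt E₂) := Fintype.ofFinite _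
  have hcard3 : 3 ≤ Fintype.card (G.Wt E₂ ⊕ Bool) := by
    rw [Fintype.card_sum, Fintype.card_bool]
    have hpos : 1 ≤ Fintype.card (G.Wt E₂) := Fintype.card_pos_iff.mpr ⟨⟨u, hu2⟩⟩
    omega
  obtain ⟨p, q, hp, hq, hw⟩ := MengerAux.core (G.mg E₂ u v a b) hcard3
    (fun ξ c d hc hd => mg_conn G h2 E₁ E₂ hcover u v a b huv hane hsep2 hu2 hv2 ha2 hb2 ξ c d hc hd)
    (Sum.inr false) (Sum.inr true) (by simp)
  obtain ⟨x₁, y₁, mid₁, hx₁, hy₁, hmid₁, hsub₁, hm₁, hm'₁⟩ := mg_decomp p hp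
  obtain ⟨x₂, y₂, mid₂, hx₂, hy₂, hmid₂, hsub₂, hm₂, hm'₂⟩ := mg_decomp q hq
  have hnepq : ∀ (cW : G.Wt E₂), Sum.inl cW ∈ mid₁.support → Sum.inl cW ∈ mid₂.support → False := by
    intro cW h1 h2
    rcases hw _ (hsub₁ _ h1) (hsub₂ _ h2) with h | h <;> cases h
  have hx12 : x₁ ≠ x₂ := by
    rintro rfl
    exact hnepq x₁ mid₁.end_mem_support mid₂.end_mem_support
  have hy12 : y₁ ≠ y₂ := by
    rintro rfl
    exact hnepq y₁ mid₁.start_mem_support mid₂.start_mem_support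
  have hxab : s(x₁.1, x₂.1) = s(a, b) := by
    rcases hx₁ with h1 | h1 <;> rcases hx₂ with h2 | h2
    · exact absurd (Subtype.ext (h1.trans h2.symm)) hx12
    · rw [h1, h2]
    · rw [h1, h2]; exact Sym2.eq_swap
    · exact absurd (Subtype.ext (h1.trans h2.symm)) hx12
  have hyuv : (y₁.1 = u ∧ y₂.1 = v) ∨ (y₁.1 = v ∧ y₂.1 = u) := by
    rcases hy₁ with h1 | h1 <;> rcases hy₂ with h2 | h2
    · exact absurd (Subtype.ext (h1.trans h2.symm)) hy12
    · exact Or.inl ⟨h1, h2⟩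
    · exact Or.inr ⟨h1, h2⟩
    · exact absurd (Subtype.ext (h1.trans h2.symm)) hy12
  have hAdjx : (G.mg E₂ u v a b).Adj (Sum.inl x₁) (Sum.inl x₂) :=
    ⟨hx12, e₂, he₂, hab.trans hxab.symm⟩
  set o : (G.mg E₂ u v a b).Walk (Sum.inl y₁) (Sum.inl y₂) :=
    mid₁.append (Walk.cons hAdjx mid₂.reverse) with ho
  have hosup : o.support = mid₁.support ++ mid₂.reverse.support := by
    rw [ho, Walk.support_append, Walk.support_cons]
    rfl
  have hoIsPath : o.IsPath := by
    rw [Walk.isPath_def, hosup]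
    refine List.Nodup.append hmid₁.support_nodup hmid₂.reverse.support_nodup ?_
    intro cc h1 h2
    rw [Walk.support_reverse, List.mem_reverse] at h2
    rcases hw cc (hsub₁ cc h1) (hsub₂ cc h2) with h | h
    · rw [h] at h1; exact hm₁ h1
    · rw [h] at h1; exact hm'₁ h1
  have hmo : Sum.inr false ∉ o.support := by
    rw [hosup, List.mem_append]
    rintro (h | h)
    · exact hm₁ h
    · rw [Walk.support_reverse, List.mem_reverse] at h
      exact hm₂ h
  have hm'o : Sum.inr true ∉ o.support := by
    rw [hosup, List.mem_append]
    rintro (h | h)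
    · exact hm'₁ h
    · rw [Walk.support_reverse, List.mem_reverse] at h
      exact hm'₂ h
  have hoinl : ∀ cc ∈ o.support, ∃ cW : G.Wt E₂, cc = Sum.inl cW := by
    intro cc hcc
    match cc with
    | Sum.inl cW => exact ⟨cW, rfl⟩
    | Sum.inr false => exact absurd hcc hmo
    | Sum.inr true => exact absurd hcc hm'o
  set val : G.Wt E₂ ⊕ Bool → G.V := Sum.elim Subtype.val (fun _ => u) with hval
  have hzrep : ∀ z ∈ o.edges, ∃ c1 c2 : G.Wt E₂, z = s(Sum.inl c1, Sum.inl c2) := by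
    intro z hz
    obtain ⟨⟨c1, c2⟩, hzz0⟩ := Quot.exists_rep z
    have hzz : z = s(c1, c2) := hzz0.symm
    subst hzz
    obtain ⟨cW1, rfl⟩ := hoinl c1 (o.fst_mem_support_of_mem_edges hz)
    obtain ⟨cW2, rfl⟩ := hoinl c2 (o.snd_mem_support_of_mem_edges hz)
    exact ⟨cW1, cW2, rfl⟩
  have hrepgood : ∀ z ∈ o.edges, ∃ e, e ∈ E₂ ∧ G.ends e = Sym2.map val z := by
    intro z hz
    obtain ⟨c1, c2, rfl⟩ := hzrep z hz
    obtain ⟨-, e, he, hee⟩ := o.adj_of_mem_edges hz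
    exact ⟨e, he, by rw [Sym2.map_pair_eq]; exact hee⟩
  set rep : Sym2 (G.Wt E₂ ⊕ Bool) → G.E := fun z =>
    if Sym2.map val z = G.ends e₂ then e₂
    else if h : ∃ e, e ∈ E₂ ∧ G.ends e = Sym2.map val z then h.choose else e₂ with hrep
  have hrepspec : ∀ z ∈ o.edges, rep z ∈ (↑E₂ : Set G.E) ∧ G.ends (rep z) = Sym2.map val z := by
    intro z hz
    by_cases h1 : Sym2.map val z = G.ends e₂
    · rw [hrep]
      simp only [if_pos h1]
      exact ⟨he₂, h1.symm⟩
    · have hex := hrepgood z hz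
      rw [hrep]
      simp only [if_neg h1, dif_pos hex]
      exact ⟨hex.choose_spec.1, hex.choose_spec.2⟩
  set Q : Set G.E := {e | ∃ z ∈ o.edges, rep z = e} with hQdef
  have hQsub : Q ⊆ (↑E₂ : Set G.E) := by
    rintro e ⟨z, hz, rfl⟩
    exact (hrepspec z hz).1
  have hmidedge : s(Sum.inl x₁, Sum.inl x₂) ∈ o.edges := by
    rw [ho, Walk.edges_append, List.mem_append, Walk.edges_cons]
    exact Or.inr (List.mem_cons_self)
  have hmapmid : Sym2.map val s(Sum.inl x₁, Sum.inl x₂) = G.ends e₂ := by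
    rw [Sym2.map_pair_eq, hab]
    exact hxab
  have he₂Q : e₂ ∈ Q := ⟨_, hmidedge, by rw [hrep]; simp only [if_pos hmapmid]⟩
  have hinj : ∀ z ∈ o.edges, ∀ z' ∈ o.edges, rep z = rep z' → z = z' := by
    intro z hz z' hz' heq
    have h1 := (hrepspec z hz).2
    have h2 := (hrepspec z' hz').2
    rw [heq, h2] at h1
    obtain ⟨c1, c2, rfl⟩ := hzrep z hz
    obtain ⟨c1', c2', rfl⟩ := hzrep z' hz'
    rw [Sym2.map_pair_eq, Sym2.map_pair_eq] at h1
    rw [Sym2.eq_iff] at h1 ⊢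
    rcases h1 with ⟨ha1, ha2⟩ | ⟨ha1, ha2⟩
    · exact Or.inl ⟨(congrArg Sum.inl (Subtype.ext ha1)).symm, (congrArg Sum.inl (Subtype.ext ha2)).symm⟩
    · exact Or.inr ⟨(congrArg Sum.inl (Subtype.ext ha2)).symm, (congrArg Sum.inl (Subtype.ext ha1)).symm⟩
  have honodup : o.edges.Nodup := hoIsPath.isTrail.edges_nodup
  have hdegQ : ∀ w : G.V, G.deg Q w = (o.edges.filter (fun z => w ∈ Sym2.map val z)).length := by
    intro w
    unfold deg
    have hset : {e ∈ Q | w ∈ G.ends e} = rep '' {z | z ∈ o.edges ∧ w ∈ Sym2.map val z} := by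
      ext e
      constructor
      · rintro ⟨⟨z, hz, rfl⟩, hwe⟩
        exact ⟨z, ⟨hz, by rwa [(hrepspec z hz).2] at hwe⟩, rfl⟩
      · rintro ⟨z, ⟨hz, hwz⟩, rfl⟩
        exact ⟨⟨z, hz, rfl⟩, by rw [(hrepspec z hz).2]; exact hwz⟩
    rw [hset, Set.ncard_image_of_injOn (fun z hz z' hz' heq => hinj z hz.1 z' hz'.1 heq)]
    have hset2 : {z | z ∈ o.edges ∧ w ∈ Sym2.map val z}
        = ↑((o.edges.filter (fun z => w ∈ Sym2.map val z)).toFinset) := by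
      ext z
      simp [List.mem_filter]
    rw [hset2, Set.ncard_coe_finset, List.toFinset_card_of_nodup (honodup.filter _)]
  have hoy12 : (Sum.inl y₁ : G.Wt E₂ ⊕ Bool) ≠ Sum.inl y₂ := fun h => hy12 (Sum.inl.inj h)
  have hbridge : ∀ (w : G.V) (hwv : w ∈ G.verts (↑E₂ : Set G.E)),
      (o.edges.filter (fun z => w ∈ Sym2.map val z)).length
      = (o.edges.filter (fun z => (Sum.inl ⟨w, hwv⟩ : G.Wt E₂ ⊕ Bool) ∈ z)).length := by
    intro w hwv
    congr 1
    apply List.filter_congr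
    intro z hz
    obtain ⟨c1, c2, rfl⟩ := hzrep z hz
    rw [decide_eq_decide]
    rw [Sym2.map_pair_eq, Sym2.mem_iff, Sym2.mem_iff]
    constructor
    · rintro (h | h)
      · exact Or.inl (congrArg Sum.inl (Subtype.ext h))
      · exact Or.inr (congrArg Sum.inl (Subtype.ext h))
    · rintro (h | h)
      · exact Or.inl (congrArg Subtype.val (Sum.inl.inj h))
      · exact Or.inr (congrArg Subtype.val (Sum.inl.inj h))
  have hcnt := MengerAux.count_edges o hoIsPath hoy12
  have hdeg_u : G.deg Q u = 1 := by
    rw [hdegQ u, hbridge u hu2, hcnt]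
    rcases hyuv with ⟨h1, _⟩ | ⟨_, h2⟩
    · have heq : (⟨u, hu2⟩ : G.Wt E₂) = y₁ := Subtype.ext h1.symm
      rw [heq, if_pos o.start_mem_support, if_pos (Or.inl rfl)]
    · have heq : (⟨u, hu2⟩ : G.Wt E₂) = y₂ := Subtype.ext h2.symm
      rw [heq, if_pos o.end_mem_support, if_pos (Or.inr rfl)]
  have hdeg_v : G.deg Q v = 1 := by
    rw [hdegQ v, hbridge v hv2, hcnt]
    rcases hyuv with ⟨_, h2⟩ | ⟨h1, _⟩
    · have heq : (⟨v, hv2⟩ : G.Wt E₂) = y₂ := Subtype.ext h2.symm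
      rw [heq, if_pos o.end_mem_support, if_pos (Or.inr rfl)]
    · have heq : (⟨v, hv2⟩ : G.Wt E₂) = y₁ := Subtype.ext h1.symm
      rw [heq, if_pos o.start_mem_support, if_pos (Or.inl rfl)]
  have hyvals : y₁.1 = u ∨ y₁.1 = v := hy₁
  have hdeg_other : ∀ w, w ≠ u → w ≠ v → G.deg Q w = 0 ∨ G.deg Q w = 2 := by
    intro w hwu hwv
    by_cases hwv2 : w ∈ G.verts (↑E₂ : Set G.E)
    · rw [hdegQ w, hbridge w hwv2, hcnt]
      rcases Classical.em ((Sum.inl ⟨w, hwv2⟩ : G.Wt E₂ ⊕ Bool) ∈ o.support) with hsup | hsup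
      · rw [if_pos hsup, if_neg ?_]
        · right; rfl
        · rintro (h | h)
          · have : w = y₁.1 := congrArg Subtype.val (Sum.inl.inj h)
            rcases hy₁ with hh | hh
            · exact hwu (this.trans hh)
            · exact hwv (this.trans hh)
          · have : w = y₂.1 := congrArg Subtype.val (Sum.inl.inj h)
            rcases hy₂ with hh | hh
            · exact hwu (this.trans hh)
            · exact hwv (this.trans hh)
      · rw [if_neg hsup]; left; rfl
    · left
      rw [hdegQ w]
      have hnil : o.edges.filter (fun z => w ∈ Sym2.map val z) = [] := by
        rw [List.filter_eq_nil_iff]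
        intro z hz hwz
        rw [decide_eq_true_eq] at hwz
        obtain ⟨c1, c2, rfl⟩ := hzrep z hz
        rw [Sym2.map_pair_eq, Sym2.mem_iff] at hwz
        rcases hwz with h | h
        · exact hwv2 (h ▸ c1.2)
        · exact hwv2 (h ▸ c2.2)
      rw [hnil]
      rfl
  have hconnQ : G.conn Q := conn_from_walk val rep o (fun z hz => (hrepspec z hz).2)
  exact ⟨Q, hQsub, Or.inr ⟨huv, ⟨e₂, he₂Q⟩, hdeg_u, hdeg_v, hdeg_other, hconnQ⟩, he₂Q⟩

end SGraph

namespace SGraph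

variable {G : SGraph} {E₁ : Finset G.E} {u v : G.V} {huv : u ≠ v} {σ : ℤˣ}

lemma proj_empty : G.proj E₁ huv σ ∅ = ∅ := by
  ext e; simp [proj]; exact fun _ h => Set.notMem_empty _ h

lemma isPath_proj {D : Set (G.plus1 E₁ huv σ).E} (hD : Sum.inr () ∉ D) (a b : G.V) :
    (G.plus1 E₁ huv σ).IsPath D a b ↔ G.IsPath (G.proj E₁ huv σ D) a b := by
  constructor
  · rintro (⟨hab, rfl⟩ | ⟨hab, hne, hda, hdb, hother, hconn⟩)
    · exact Or.inl ⟨hab, proj_empty⟩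
    · refine Or.inr ⟨hab, ?_, ?_, ?_, ?_, (conn_proj hD).mp hconn⟩
      · obtain ⟨x, hx⟩ := hne
        match x with
        | Sum.inl ⟨e, he⟩ => exact ⟨e, he, hx⟩
        | Sum.inr () => exact absurd hx hD
      · rw [← deg_proj hD]; exact hda
      · rw [← deg_proj hD]; exact hdb
      · intro w hw1 hw2
        rw [← deg_proj hD]
        exact hother w hw1 hw2
  · rintro (⟨hab, hP⟩ | ⟨hab, hne, hda, hdb, hother, hconn⟩)
    · left
      refine ⟨hab, ?_⟩
      rw [← emb_image_proj hD, hP, Set.image_empty]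
    · refine Or.inr ⟨hab, ?_, ?_, ?_, ?_, (conn_proj hD).mpr hconn⟩
      · obtain ⟨e, he, hDe⟩ := hne
        exact ⟨Sum.inl ⟨e, he⟩, hDe⟩
      · rw [deg_proj hD]; exact hda
      · rw [deg_proj hD]; exact hdb
      · intro w hw1 hw2
        erw [deg_proj hD]
        exact hother w hw1 hw2

lemma tied_symm {e f : G.E} (h : G.Tied e f) : G.Tied f e :=
  fun C C' hC hC' h1 h2 h1' h2' => h C C' hC hC' h2 h1 h2' h1'

/-- Stripping the extra edge from a cycle of `plus1` yields a `u`–`v` path of `G`. -/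
lemma strip (G : SGraph) (E₁ : Finset G.E) {u v : G.V} (huv : u ≠ v)
    {e₁ : G.E} (he₁ : e₁ ∈ E₁)
    (D : Set (G.plus1 E₁ huv 1).E) (hD : (G.plus1 E₁ huv 1).IsCycle D)
    (heD : Sum.inl ⟨e₁, he₁⟩ ∈ D) (hfD : Sum.inr () ∈ D) :
    ∃ P : Set G.E, P ⊆ ↑E₁ ∧ G.IsPath P u v ∧ e₁ ∈ P ∧
      G.signOf P = (G.plus1 E₁ huv 1).signOf D := by
  have hunion : (D \ {Sum.inr ()}) ∪ {Sum.inr ()} = D := by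
    rw [Set.diff_union_self]; exact Set.union_eq_self_of_subset_right (Set.singleton_subset_iff.mpr hfD)
  have hdisf : Disjoint (D \ {Sum.inr ()}) ({Sum.inr ()} : Set (G.plus1 E₁ huv 1).E) :=
    Set.disjoint_sdiff_left
  have hverts : (G.plus1 E₁ huv 1).verts (D \ {Sum.inr ()}) ∩
      (G.plus1 E₁ huv 1).verts {Sum.inr ()} ⊆ {u, v} := by
    intro w hw
    have h2 := hw.2
    erw [verts_single (G := G.plus1 E₁ huv 1) (f := Sum.inr ()) rfl] at h2
    exact h2
  have hein : Sum.inl ⟨e₁, he₁⟩ ∈ D \ {Sum.inr ()} := ⟨heD, fun h => Sum.inl_ne_inr (Set.mem_singleton_iff.mp h)⟩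
  have hsp := split_half (G := G.plus1 E₁ huv 1) huv hD hunion hdisf hverts
    ⟨_, hein⟩ ⟨Sum.inr (), rfl⟩
  have hDinr : Sum.inr () ∉ D \ {Sum.inr ()} := fun h => h.2 (Set.mem_singleton _)
  refine ⟨G.proj E₁ huv 1 (D \ {Sum.inr ()}), proj_sub _, (isPath_proj hDinr u v).mp hsp,
    (mem_proj he₁ _).mpr hein, ?_⟩
  have h1 : (G.plus1 E₁ huv 1).signOf D
      = (G.plus1 E₁ huv 1).signOf (D \ {Sum.inr ()}) * (G.plus1 E₁ huv 1).signOf {Sum.inr ()} := by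
    rw [← signOf_union hdisf, hunion]
  erw [h1, signOf_singleton]
  have hone : (G.plus1 E₁ huv 1).sgn (Sum.inr ()) = 1 := rfl
  rw [hone, mul_one, signOf_proj hDinr]

/-- Lifting a `u`–`v` path of `G` plus the extra edge is a cycle of `plus1`. -/
lemma lift (G : SGraph) (E₁ : Finset G.E) {u v : G.V} (huv : u ≠ v)
    {e₁ : G.E} (he₁ : e₁ ∈ E₁)
    (P : Set G.E) (hPsub : P ⊆ ↑E₁) (hPpath : G.IsPath P u v) (hPe : e₁ ∈ P) :
    (G.plus1 E₁ huv 1).IsCycle (G.emb E₁ huv 1 '' P ∪ {Sum.inr ()}) ∧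
    (G.plus1 E₁ huv 1).signOf (G.emb E₁ huv 1 '' P ∪ {Sum.inr ()}) = G.signOf P ∧
    Sum.inl ⟨e₁, he₁⟩ ∈ (G.emb E₁ huv 1 '' P ∪ {Sum.inr ()} : Set (G.plus1 E₁ huv 1).E) := by
  have hDinr : Sum.inr () ∉ G.emb E₁ huv 1 '' P := inr_not_mem_emb_image hPsub
  have hproj : G.proj E₁ huv 1 (G.emb E₁ huv 1 '' P) = P := proj_emb_image hPsub
  have hpath : (G.plus1 E₁ huv 1).IsPath (G.emb E₁ huv 1 '' P) u v := by
    rw [isPath_proj hDinr u v, hproj]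
    exact hPpath
  have hfpath : (G.plus1 E₁ huv 1).IsPath ({Sum.inr ()} : Set (G.plus1 E₁ huv 1).E) u v :=
    isPath_single huv rfl
  have hdis : Disjoint (G.emb E₁ huv 1 '' P) ({Sum.inr ()} : Set (G.plus1 E₁ huv 1).E) :=
    Set.disjoint_singleton_right.mpr hDinr
  have hverts : (G.plus1 E₁ huv 1).verts (G.emb E₁ huv 1 '' P) ∩
      (G.plus1 E₁ huv 1).verts {Sum.inr ()} ⊆ {u, v} := by
    intro w hw
    have h2 := hw.2
    erw [verts_single (G := G.plus1 E₁ huv 1) (f := Sum.inr ()) rfl] at h2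
    exact h2
  obtain ⟨hcyc, hsign⟩ := glue (G := G.plus1 E₁ huv 1) huv hpath hfpath hdis hverts
  refine ⟨hcyc, ?_, Or.inl ⟨e₁, hPe, emb_eq he₁⟩⟩
  erw [hsign, signOf_singleton]
  have hone : (G.plus1 E₁ huv 1).sgn (Sum.inr ()) = 1 := rfl
  rw [hone, mul_one]
  rw [signOf_proj hDinr, hproj]

lemma forward_half (G : SGraph) (h2 : G.KConnected 2)
    (E₁ E₂ : Finset G.E) (hdisj : Disjoint E₁ E₂) (hcover : E₁ ∪ E₂ = Finset.univ)
    (u v : G.V) (huv : u ≠ v)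
    (hsep : G.verts ↑E₁ ∩ G.verts ↑E₂ = {u, v})
    (e₁ : G.E) (he₁ : e₁ ∈ E₁) (e₂ : G.E) (he₂ : e₂ ∈ E₂)
    (htied : G.Tied e₁ e₂) :
    (G.plus1 E₁ huv 1).Tied (Sum.inl ⟨e₁, he₁⟩) (Sum.inr ()) := by
  obtain ⟨Q, hQsub, hQpath, hQe⟩ := exists_path G h2 E₁ E₂ hdisj hcover u v huv hsep e₂ he₂
  intro D D' hD hD' heD hfD heD' hfD'
  obtain ⟨P, hPsub, hPpath, hPe, hPsign⟩ := strip G E₁ huv he₁ D hD heD hfD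
  obtain ⟨P', hPsub', hPpath', hPe', hPsign'⟩ := strip G E₁ huv he₁ D' hD' heD' hfD'
  have hQdis : ∀ {R : Set G.E}, R ⊆ ↑E₁ → Disjoint R Q := fun hR =>
    ((Finset.disjoint_coe.mpr hdisj).mono hR hQsub)
  have hQverts : ∀ {R : Set G.E}, R ⊆ ↑E₁ → G.verts R ∩ G.verts Q ⊆ {u, v} := by
    intro R hR w hw
    rw [← hsep]
    exact ⟨verts_mono hR hw.1, verts_mono hQsub hw.2⟩
  obtain ⟨hZ, hZs⟩ := glue huv hPpath hQpath (hQdis hPsub) (hQverts hPsub)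
  obtain ⟨hZ', hZs'⟩ := glue huv hPpath' hQpath (hQdis hPsub') (hQverts hPsub')
  have hkey := htied (P ∪ Q) (P' ∪ Q) hZ hZ' (Or.inl hPe) (Or.inr hQe)
    (Or.inl hPe') (Or.inr hQe)
  rw [hZs, hZs'] at hkey
  have : G.signOf P = G.signOf P' := mul_right_cancel hkey
  rw [← hPsign, ← hPsign', this]

end SGraph

/-- Observation 2.1(1): across a 2-separation with `eᵢ ∈ E(Gᵢ)`, the edges `e₁, e₂`
are tied in `G` iff `eᵢ` and the added positive edge `fᵢ = uv` are tied in `Gᵢ⁺`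
for both `i = 1, 2`. -/
theorem stmt_10 (G : SGraph) (h2 : G.KConnected 2)
    (E₁ E₂ : Finset G.E) (hdisj : Disjoint E₁ E₂) (hcover : E₁ ∪ E₂ = Finset.univ)
    (u v : G.V) (huv : u ≠ v)
    (hsep : G.verts ↑E₁ ∩ G.verts ↑E₂ = {u, v})
    (e₁ : G.E) (he₁ : e₁ ∈ E₁) (e₂ : G.E) (he₂ : e₂ ∈ E₂) :
    G.Tied e₁ e₂ ↔
      ((G.plus1 E₁ huv 1).Tied (Sum.inl ⟨e₁, he₁⟩) (Sum.inr ()) ∧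
       (G.plus1 E₂ huv 1).Tied (Sum.inl ⟨e₂, he₂⟩) (Sum.inr ())) := by
  have hcover' : (↑E₁ ∪ ↑E₂ : Set G.E) = Set.univ := by
    rw [← Finset.coe_union, hcover, Finset.coe_univ]
  constructor
  · intro htied
    refine ⟨SGraph.forward_half G h2 E₁ E₂ hdisj hcover u v huv hsep e₁ he₁ e₂ he₂ htied,
      SGraph.forward_half G h2 E₂ E₁ hdisj.symm (by rw [Finset.union_comm]; exact hcover)
        u v huv (by rw [Set.inter_comm]; exact hsep) e₂ he₂ e₁ he₁ (SGraph.tied_symm htied)⟩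
  · rintro ⟨ht1, ht2⟩ C C' hC hC' h1 h2' h1' h2''
    have hsplitC : ∀ (C : Set G.E), G.IsCycle C → e₁ ∈ C → e₂ ∈ C →
        G.IsPath (C ∩ ↑E₁) u v ∧ G.IsPath (C ∩ ↑E₂) u v ∧ (C ∩ ↑E₁) ∪ (C ∩ ↑E₂) = C := by
      intro C hCy heC heC'
      have hun : (C ∩ ↑E₁) ∪ (C ∩ ↑E₂) = C := by
        rw [← Set.inter_union_distrib_left, hcover', Set.inter_univ]
      have hdis : Disjoint (C ∩ ↑E₁) (C ∩ ↑E₂) :=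
        (Finset.disjoint_coe.mpr hdisj).mono Set.inter_subset_right Set.inter_subset_right
      have hverts : G.verts (C ∩ ↑E₁) ∩ G.verts (C ∩ ↑E₂) ⊆ {u, v} := by
        intro w hw
        rw [← hsep]
        exact ⟨SGraph.verts_mono Set.inter_subset_right hw.1,
          SGraph.verts_mono Set.inter_subset_right hw.2⟩
      obtain ⟨hp1, hp2⟩ := SGraph.split huv hCy hun hdis hverts
        ⟨e₁, heC, he₁⟩ ⟨e₂, heC', he₂⟩
      exact ⟨hp1, hp2, hun⟩
    obtain ⟨hCp1, hCp2, hCun⟩ := hsplitC C hC h1 h2'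
    obtain ⟨hCp1', hCp2', hCun'⟩ := hsplitC C' hC' h1' h2''
    -- lift side 1
    obtain ⟨hcyc1, hsgn1, hmem1⟩ := SGraph.lift G E₁ huv he₁ (C ∩ ↑E₁)
      Set.inter_subset_right hCp1 ⟨h1, he₁⟩
    obtain ⟨hcyc1', hsgn1', hmem1'⟩ := SGraph.lift G E₁ huv he₁ (C' ∩ ↑E₁)
      Set.inter_subset_right hCp1' ⟨h1', he₁⟩
    have hs1 := ht1 _ _ hcyc1 hcyc1' hmem1 (Or.inr rfl) hmem1' (Or.inr rfl)
    rw [hsgn1, hsgn1'] at hs1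
    -- lift side 2
    obtain ⟨hcyc2, hsgn2, hmem2⟩ := SGraph.lift G E₂ huv he₂ (C ∩ ↑E₂)
      Set.inter_subset_right hCp2 ⟨h2', he₂⟩
    obtain ⟨hcyc2', hsgn2', hmem2'⟩ := SGraph.lift G E₂ huv he₂ (C' ∩ ↑E₂)
      Set.inter_subset_right hCp2' ⟨h2'', he₂⟩
    have hs2 := ht2 _ _ hcyc2 hcyc2' hmem2 (Or.inr rfl) hmem2' (Or.inr rfl)
    rw [hsgn2, hsgn2'] at hs2
    -- combine
    have hdisC : Disjoint (C ∩ ↑E₁) (C ∩ ↑E₂) :=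
      (Finset.disjoint_coe.mpr hdisj).mono Set.inter_subset_right Set.inter_subset_right
    have hdisC' : Disjoint (C' ∩ ↑E₁) (C' ∩ ↑E₂) :=
      (Finset.disjoint_coe.mpr hdisj).mono Set.inter_subset_right Set.inter_subset_right
    calc G.signOf C = G.signOf ((C ∩ ↑E₁) ∪ (C ∩ ↑E₂)) := by rw [hCun]
      _ = G.signOf (C ∩ ↑E₁) * G.signOf (C ∩ ↑E₂) := SGraph.signOf_union hdisC
      _ = G.signOf (C' ∩ ↑E₁) * G.signOf (C' ∩ ↑E₂) := by rw [hs1, hs2]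
      _ = G.signOf ((C' ∩ ↑E₁) ∪ (C' ∩ ↑E₂)) := (SGraph.signOf_union hdisC').symm
      _ = G.signOf C' := by rw [hCun']
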